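/- arXiv:2010.12052 — 7 statements merged into one kernel-verified Lean document; each statement's English description precedes it below -/
import Mathlib

section
/- There exists an instance of 1|s_j,B|C_max (a finite job set J with capacity B, sizes s_j and processing times p_j as above) with the following property: letting m* denote the minimum number of batches over all capacity-feasible schedules of the instance, every capacity-feasible schedule that uses exactly m* batches has makespan strictly greater than the optimal makespan. Hence restricting the number of batches to the minimum feasible number can exclude all optimal schedules. -/
open Finset

def s4 : Fin 4 → ℕ := ![2,2,1,1]
def p4 : Fin 4 → ℕ := ![1,1,3,3]

lemma cap4 : ∀ S : Finset (Fin 4), ∑ j ∈ S, s4 j ≤ 3 →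
    ¬(0 ∈ S ∧ 1 ∈ S) ∧ ¬(2 ∈ S ∧ 3 ∈ S ∧ 0 ∈ S) ∧ ¬(2 ∈ S ∧ 3 ∈ S ∧ 1 ∈ S) := by decide

def P2 : Finpartition (univ : Finset (Fin 4)) where
  parts := {{0,2},{1,3}}
  supIndep := by
    rw [Finset.supIndep_iff_pairwiseDisjoint]
    intro a ha b hb hab
    simp only [coe_insert, Set.mem_insert_iff, coe_singleton, Set.mem_singleton_iff] at ha hb
    rcases ha with rfl|rfl <;> rcases hb with rfl|rfl <;> first | exact absurd rfl hab | decide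
  sup_parts := by decide
  bot_notMem := by decide

def P3 : Finpartition (univ : Finset (Fin 4)) where
  parts := {{0},{1},{2,3}}
  supIndep := by
    rw [Finset.supIndep_iff_pairwiseDisjoint]
    intro a ha b hb hab
    simp only [coe_insert, Set.mem_insert_iff, coe_singleton, Set.mem_singleton_iff] at ha hb
    rcases ha with rfl|rfl|rfl <;> rcases hb with rfl|rfl|rfl <;>
      first | exact absurd rfl hab | decide
  sup_parts := by decide
  bot_notMem := by decide

lemma three_parts (P : Finpartition (univ : Finset (Fin 4)))
    (hc : ∀ S ∈ P.parts, ∑ j ∈ S, s4 j ≤ 3) :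
    (∃ A ∈ P.parts, ∃ C ∈ P.parts, A ≠ C ∧ 2 ∈ A ∧ 3 ∈ C) ∨
    (∃ A ∈ P.parts, ∃ D ∈ P.parts, ∃ E ∈ P.parts,
      A ≠ D ∧ A ≠ E ∧ D ≠ E ∧ 2 ∈ A ∧ 3 ∈ A ∧ 0 ∈ D ∧ 1 ∈ E) := by
  obtain ⟨A, hA, h2A⟩ := P.exists_mem (mem_univ 2)
  obtain ⟨C, hC, h3C⟩ := P.exists_mem (mem_univ 3)
  by_cases hAC : A = C
  · subst hAC
    right
    obtain ⟨D, hD, h0D⟩ := P.exists_mem (mem_univ 0)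
    obtain ⟨E, hE, h1E⟩ := P.exists_mem (mem_univ 1)
    refine ⟨A, hA, D, hD, E, hE, ?_, ?_, ?_, h2A, h3C, h0D, h1E⟩
    · rintro rfl; exact (cap4 A (hc A hA)).2.1 ⟨h2A, h3C, h0D⟩
    · rintro rfl; exact (cap4 A (hc A hA)).2.2 ⟨h2A, h3C, h1E⟩
    · rintro rfl; exact (cap4 D (hc D hD)).1 ⟨h0D, h1E⟩
  · exact Or.inl ⟨A, hA, C, hC, hAC, h2A, h3C⟩

lemma lb5 (P : Finpartition (univ : Finset (Fin 4)))
    (hc : ∀ S ∈ P.parts, ∑ j ∈ S, s4 j ≤ 3) : 5 ≤ ∑ S ∈ P.parts, S.sup p4 := by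
  rcases three_parts P hc with ⟨A, hA, C, hC, hAC, h2A, h3C⟩ |
    ⟨A, hA, D, hD, E, hE, hAD, hAE, hDE, h2A, _, h0D, h1E⟩
  · have hsub : ({A, C} : Finset (Finset (Fin 4))) ⊆ P.parts := by
      intro x hx; simp only [mem_insert, mem_singleton] at hx
      rcases hx with rfl | rfl <;> assumption
    have h1 : (3:ℕ) ≤ A.sup p4 := le_sup (f := p4) h2A
    have h2 : (3:ℕ) ≤ C.sup p4 := le_sup (f := p4) h3C
    have : ∑ S ∈ ({A, C} : Finset (Finset (Fin 4))), S.sup p4 ≤ ∑ S ∈ P.parts, S.sup p4 :=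
      sum_le_sum_of_subset hsub
    rw [sum_insert (by simp [hAC]), sum_singleton] at this
    omega
  · have hsub : ({A, D, E} : Finset (Finset (Fin 4))) ⊆ P.parts := by
      intro x hx; simp only [mem_insert, mem_singleton] at hx
      rcases hx with rfl | rfl | rfl <;> assumption
    have h1 : (3:ℕ) ≤ A.sup p4 := le_sup (f := p4) h2A
    have h2 : (1:ℕ) ≤ D.sup p4 := le_sup (f := p4) h0D
    have h3 : (1:ℕ) ≤ E.sup p4 := le_sup (f := p4) h1E
    have hle : ∑ S ∈ ({A, D, E} : Finset (Finset (Fin 4))), S.sup p4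
        ≤ ∑ S ∈ P.parts, S.sup p4 := sum_le_sum_of_subset hsub
    rw [sum_insert (by simp [hAD, hAE]), sum_insert (by simp [hDE]), sum_singleton] at hle
    omega

lemma lb6 (P : Finpartition (univ : Finset (Fin 4)))
    (hc : ∀ S ∈ P.parts, ∑ j ∈ S, s4 j ≤ 3) (hcard : P.parts.card = 2) :
    6 ≤ ∑ S ∈ P.parts, S.sup p4 := by
  rcases three_parts P hc with ⟨A, hA, C, hC, hAC, h2A, h3C⟩ |
    ⟨A, hA, D, hD, E, hE, hAD, hAE, hDE, _, _, _, _⟩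
  · have hsub : ({A, C} : Finset (Finset (Fin 4))) ⊆ P.parts := by
      intro x hx; simp only [mem_insert, mem_singleton] at hx
      rcases hx with rfl | rfl <;> assumption
    have h1 : (3:ℕ) ≤ A.sup p4 := le_sup (f := p4) h2A
    have h2 : (3:ℕ) ≤ C.sup p4 := le_sup (f := p4) h3C
    have : ∑ S ∈ ({A, C} : Finset (Finset (Fin 4))), S.sup p4 ≤ ∑ S ∈ P.parts, S.sup p4 :=
      sum_le_sum_of_subset hsub
    rw [sum_insert (by simp [hAC]), sum_singleton] at this
    omega
  · exfalso
    have hsub : ({A, D, E} : Finset (Finset (Fin 4))) ⊆ P.parts := by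
      intro x hx; simp only [mem_insert, mem_singleton] at hx
      rcases hx with rfl | rfl | rfl <;> assumption
    have h3 : ({A, D, E} : Finset (Finset (Fin 4))).card = 3 := by
      rw [card_insert_of_notMem (by simp [hAD, hAE]),
        card_insert_of_notMem (by simp [hDE]), card_singleton]
    have := card_le_card hsub
    omega

lemma lb2 (P : Finpartition (univ : Finset (Fin 4)))
    (hc : ∀ S ∈ P.parts, ∑ j ∈ S, s4 j ≤ 3) : 2 ≤ P.parts.card := by
  obtain ⟨A, hA, h0A⟩ := P.exists_mem (mem_univ 0)
  obtain ⟨B, hB, h1B⟩ := P.exists_mem (mem_univ 1)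
  have hAB : A ≠ B := by
    rintro rfl; exact (cap4 A (hc A hA)).1 ⟨h0A, h1B⟩
  have : 1 < P.parts.card := one_lt_card.mpr ⟨A, hA, B, hB, hAB⟩
  omega


/-- There exists an instance of `1|s_j,B|C_max` such that, letting `mstar` be the minimum
number of batches over all capacity-feasible schedules, every capacity-feasible schedule
using exactly `mstar` batches has makespan strictly greater than the optimal makespan
`Mopt`. Schedules are `Finpartition`s of the job set; capacity-feasibility of a schedule
means every batch `S` satisfies `∑ j ∈ S, s j ≤ B`; the makespan of a schedule is
`∑ S ∈ P.parts, S.sup p`. -/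
theorem min_batches_can_exclude_optimum :
    ∃ (n B : ℕ) (_ : 1 ≤ n) (_ : 1 ≤ B) (s p : Fin n → ℕ)
      (_ : ∀ j, 1 ≤ s j ∧ s j ≤ B) (_ : ∀ j, 1 ≤ p j) (mstar Mopt : ℕ),
      IsLeast {m : ℕ | ∃ P : Finpartition (univ : Finset (Fin n)),
          (∀ S ∈ P.parts, ∑ j ∈ S, s j ≤ B) ∧ P.parts.card = m} mstar ∧
      IsLeast {M : ℕ | ∃ P : Finpartition (univ : Finset (Fin n)),
          (∀ S ∈ P.parts, ∑ j ∈ S, s j ≤ B) ∧ ∑ S ∈ P.parts, S.sup p = M} Mopt ∧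
      ∀ P : Finpartition (univ : Finset (Fin n)),
        (∀ S ∈ P.parts, ∑ j ∈ S, s j ≤ B) → P.parts.card = mstar →
        Mopt < ∑ S ∈ P.parts, S.sup p := by
  refine ⟨4, 3, by norm_num, by norm_num, s4, p4, by decide, by decide, 2, 5, ?_, ?_, ?_⟩
  · constructor
    · exact ⟨P2, by decide, by decide⟩
    · rintro m ⟨P, hc, rfl⟩; exact lb2 P hc
  · constructor
    · exact ⟨P3, by decide, by decide⟩
    · rintro M ⟨P, hc, rfl⟩; exact lb5 P hc
  · intro P hc hcard
    have := lb6 P hc hcard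
    omega
end

section
/- Let n = |J| and K = {1,…,n}. A feasible solution of (MILP1) consists of x : J × K → {0,1}, y : K → {0,1} and C : K → ℝ satisfying: Σ_{k∈K} x_{jk} = 1 for every j ∈ J; Σ_{j∈J} s_j x_{jk} ≤ B·y_k for every k ∈ K; and C_k ≥ p_j x_{jk} for every j ∈ J and k ∈ K. Then the minimum of Σ_{k∈K} C_k over all feasible solutions of (MILP1) is attained and equals the optimal makespan of the instance. -/
open Finset

/-- Correctness of the formulation (MILP1) of Melouk et al. (with batch index set
`K = {1,…,n}`, `n` the number of jobs): the minimum of `∑ k, C k` over all feasible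
solutions `(x, y, C)` — where `x : J × K → {0,1}`, `y : K → {0,1}`, `C : K → ℝ` satisfy
the assignment constraints `∑ k, x j k = 1`, the capacity constraints
`∑ j, s j * x j k ≤ B * y k`, and the processing-time constraints `p j * x j k ≤ C k` —
is attained and equals the optimal makespan `Mopt` of the instance. -/
theorem MILP1_correct (n B : ℕ) (hn : 1 ≤ n) (hB : 1 ≤ B)
    (s p : Fin n → ℕ) (hs : ∀ j, 1 ≤ s j ∧ s j ≤ B) (hp : ∀ j, 1 ≤ p j)
    (Mopt : ℕ)
    (hopt : IsLeast {M : ℕ | ∃ P : Finpartition (univ : Finset (Fin n)),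
        (∀ S ∈ P.parts, ∑ j ∈ S, s j ≤ B) ∧ ∑ S ∈ P.parts, S.sup p = M} Mopt) :
    IsLeast {r : ℝ | ∃ (x : Fin n → Fin n → ℕ) (y : Fin n → ℕ) (C : Fin n → ℝ),
        (∀ j k, x j k ≤ 1) ∧ (∀ k, y k ≤ 1) ∧
        (∀ j, ∑ k, x j k = 1) ∧
        (∀ k, ∑ j, s j * x j k ≤ B * y k) ∧
        (∀ j k, ((p j * x j k : ℕ) : ℝ) ≤ C k) ∧
        ∑ k, C k = r} (Mopt : ℝ) := by
  classical
  obtain ⟨⟨P, hPcap, hPsum⟩, hlb⟩ := hopt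
  constructor
  · -- membership: build a feasible MILP solution from the optimal partition
    have hcard : Fintype.card ↥P.parts ≤ Fintype.card (Fin n) := by
      simpa using P.card_parts_le_card
    obtain ⟨e⟩ := Function.Embedding.nonempty_of_card_le hcard
    set g : Fin n → Fin n := fun j => e ⟨P.part j, P.part_mem.mpr (mem_univ j)⟩ with hg
    have hmem : ∀ j, j ∈ P.part j := fun j => P.mem_part (mem_univ j)
    have hfiber : ∀ j0 : Fin n, univ.filter (fun j => g j = g j0) = P.part j0 := by
      intro j0
      ext j
      simp only [mem_filter, mem_univ, true_and, hg]
      constructor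
      · intro h
        have h2 : P.part j = P.part j0 := congrArg Subtype.val (e.injective h)
        exact h2 ▸ hmem j
      · intro h
        have h2 : P.part j = P.part j0 :=
          P.eq_of_mem_parts (P.part_mem.mpr (mem_univ j)) (P.part_mem.mpr (mem_univ j0)) (hmem j) h
        exact congrArg e (Subtype.ext h2)
    have hgS : ∀ S : ↥P.parts, ∀ j0 ∈ (S : Finset (Fin n)), g j0 = e S := by
      rintro ⟨S, hS⟩ j0 hj0
      have h2 : P.part j0 = S :=
        P.eq_of_mem_parts (P.part_mem.mpr (mem_univ j0)) hS (hmem j0) hj0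
      exact congrArg e (Subtype.ext h2)
    refine ⟨fun j k => if g j = k then 1 else 0,
      fun k => if ∃ j, g j = k then 1 else 0,
      fun k => (((univ.filter (fun j => g j = k)).sup p : ℕ) : ℝ),
      ?_, ?_, ?_, ?_, ?_, ?_⟩
    · intro j k; dsimp only; split <;> simp
    · intro k; dsimp only; split <;> simp
    · intro j; simp
    · intro k
      dsimp only
      by_cases h : ∃ j0, g j0 = k
      · obtain ⟨j0, rfl⟩ := h
        rw [if_pos ⟨j0, rfl⟩, mul_one]
        calc ∑ j, s j * (if g j = g j0 then 1 else 0)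
            = ∑ j ∈ univ.filter (fun j => g j = g j0), s j := by
              rw [Finset.sum_filter]
              exact Finset.sum_congr rfl fun j _ => by split <;> simp
          _ = ∑ j ∈ P.part j0, s j := by rw [hfiber]
          _ ≤ B := hPcap _ (P.part_mem.mpr (mem_univ j0))
      · have h0 : ∀ j, (if g j = k then (1:ℕ) else 0) = 0 :=
          fun j => if_neg (fun hh => h ⟨j, hh⟩)
        simp [h0]
    · intro j k
      dsimp only
      by_cases h : g j = k
      · subst h
        have hle : p j ≤ (univ.filter (fun j' => g j' = g j)).sup p :=
          Finset.le_sup (by simp)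
        simpa using hle
      · simp only [if_neg h, mul_zero, Nat.cast_zero]
        exact Nat.cast_nonneg _
    · -- the objective value equals Mopt
      have himage : univ.image g = P.parts.attach.image (fun S => e S) := by
        ext k
        simp only [mem_image, mem_univ, true_and, mem_attach, exists_true_left]
        constructor
        · rintro ⟨j, rfl⟩
          exact ⟨⟨P.part j, P.part_mem.mpr (mem_univ j)⟩, rfl⟩
        · rintro ⟨⟨S, hS⟩, rfl⟩
          obtain ⟨j0, hj0⟩ := P.nonempty_of_mem_parts hS
          exact ⟨j0, hgS ⟨S, hS⟩ j0 hj0⟩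
      have hzero : ∀ k ∉ univ.image g,
          (((univ.filter (fun j => g j = k)).sup p : ℕ) : ℝ) = 0 := by
        intro k hk
        have hempty : univ.filter (fun j => g j = k) = ∅ := by
          ext j
          simp only [mem_filter, mem_univ, true_and, notMem_empty, iff_false]
          intro hh
          exact hk (hh ▸ mem_image_of_mem g (mem_univ j))
        simp [hempty]
      calc ∑ k, (((univ.filter (fun j => g j = k)).sup p : ℕ) : ℝ)
          = ∑ k ∈ univ.image g, (((univ.filter (fun j => g j = k)).sup p : ℕ) : ℝ) := by
            symm
            exact Finset.sum_subset (subset_univ _) (fun k _ hk => hzero k hk)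
        _ = ∑ S ∈ P.parts.attach,
              (((univ.filter (fun j => g j = e S)).sup p : ℕ) : ℝ) := by
            rw [himage]
            exact Finset.sum_image (fun a _ b _ h => e.injective h)
        _ = ∑ S ∈ P.parts.attach, (((S : Finset (Fin n)).sup p : ℕ) : ℝ) := by
            refine Finset.sum_congr rfl fun S _ => ?_
            obtain ⟨j0, hj0⟩ := P.nonempty_of_mem_parts S.2
            have h1 : e S = g j0 := (hgS S j0 hj0).symm
            rw [h1, hfiber j0]
            congr 2
            exact (P.eq_of_mem_parts (P.part_mem.mpr (mem_univ j0)) S.2 (hmem j0) hj0)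
        _ = ((∑ S ∈ P.parts, S.sup p : ℕ) : ℝ) := by
            rw [Nat.cast_sum, ← Finset.sum_attach P.parts (fun S => ((S.sup p : ℕ) : ℝ))]
        _ = (Mopt : ℝ) := by rw [hPsum]
  · -- lower bound
    rintro r ⟨x, y, C, hx1, hy1, hxsum, hcap, hC, rfl⟩
    -- each job goes to a unique batch index
    have hb : ∀ j, ∃ k, x j k = 1 ∧ ∀ k', k' ≠ k → x j k' = 0 := by
      intro j
      have h1 := hxsum j
      have hex : ∃ k, x j k ≠ 0 := by
        by_contra h
        push_neg at h
        simp [h] at h1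
      obtain ⟨k, hk⟩ := hex
      have hk1 : x j k = 1 := le_antisymm (hx1 j k) (Nat.one_le_iff_ne_zero.mpr hk)
      have hsplit : x j k + ∑ k' ∈ univ.erase k, x j k' = 1 := by
        rw [Finset.add_sum_erase _ _ (mem_univ k)]; exact h1
      have hrest : ∑ k' ∈ univ.erase k, x j k' = 0 := by omega
      refine ⟨k, hk1, fun k' hk' => ?_⟩
      exact (Finset.sum_eq_zero_iff.mp hrest) k' (mem_erase.mpr ⟨hk', mem_univ k'⟩)
    choose b hb1 hb0 using hb
    have hxval : ∀ j k, x j k = if b j = k then 1 else 0 := by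
      intro j k
      split
      · next h => rw [← h]; exact hb1 j
      · next h => exact hb0 j k (fun hh => h hh.symm)
    have hmemfib : ∀ j, j ∈ univ.filter (fun j' => b j' = b j) := by
      intro j; simp
    -- the induced partition
    set parts : Finset (Finset (Fin n)) :=
      (univ.image b).image (fun k => univ.filter (fun j => b j = k)) with hparts
    let P' : Finpartition (univ : Finset (Fin n)) :=
      { parts := parts
        supIndep := by
          rw [Finset.supIndep_iff_pairwiseDisjoint]
          intro S hS T hT hne
          simp only [hparts, coe_image, Set.mem_image, mem_coe] at hS hT
          obtain ⟨k1, -, rfl⟩ := hS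
          obtain ⟨k2, -, rfl⟩ := hT
          simp only [Function.onFun, id_eq]
          rw [Finset.disjoint_left]
          intro j hj1 hj2
          simp only [id_eq, mem_filter] at hj1 hj2
          exact hne (by rw [← hj1.2, ← hj2.2])
        sup_parts := by
          refine le_antisymm (Finset.sup_le fun S _ => Finset.subset_univ S) ?_
          intro j _
          rw [Finset.mem_sup]
          exact ⟨_, mem_image_of_mem _ (mem_image_of_mem b (mem_univ j)), hmemfib j⟩
        bot_notMem := by
          simp only [hparts, bot_eq_empty, mem_image, not_exists]
          rintro k ⟨hk, hk2⟩
          simp only [mem_image, mem_univ, true_and] at hk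
          obtain ⟨j, rfl⟩ := hk
          have := hmemfib j
          rw [hk2] at this
          exact notMem_empty _ this }
    have hP'parts : P'.parts = parts := rfl
    -- capacity feasibility of the induced partition
    have hfibsum : ∀ k, ∑ j ∈ univ.filter (fun j => b j = k), s j = ∑ j, s j * x j k := by
      intro k
      rw [Finset.sum_filter]
      refine Finset.sum_congr rfl fun j _ => ?_
      rw [hxval]
      split <;> simp
    have hcapP : ∀ S ∈ P'.parts, ∑ j ∈ S, s j ≤ B := by
      intro S hS
      rw [hP'parts, hparts] at hS
      simp only [mem_image, mem_univ, true_and] at hS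
      obtain ⟨k, -, rfl⟩ := hS
      calc ∑ j ∈ univ.filter (fun j => b j = k), s j = ∑ j, s j * x j k := hfibsum k
        _ ≤ B * y k := hcap k
        _ ≤ B * 1 := Nat.mul_le_mul_left B (hy1 k)
        _ = B := mul_one B
    have hMle : Mopt ≤ ∑ S ∈ P'.parts, S.sup p := hlb ⟨P', hcapP, rfl⟩
    -- the makespan of the partition is at most the objective value
    have hCnn : ∀ k, 0 ≤ C k := by
      intro k
      have := hC ⟨0, hn⟩ k
      exact le_trans (Nat.cast_nonneg _) this
    have hsum_parts : ∑ S ∈ P'.parts, ((S.sup p : ℕ) : ℝ)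
        = ∑ k ∈ univ.image b, (((univ.filter (fun j => b j = k)).sup p : ℕ) : ℝ) := by
      rw [hP'parts, hparts]
      refine Finset.sum_image fun k1 hk1 k2 hk2 h => ?_
      simp only [mem_coe, mem_image, mem_univ, true_and] at hk1
      obtain ⟨j1, rfl⟩ := hk1
      have h1 := hmemfib j1
      rw [h] at h1
      simp only [mem_filter] at h1
      exact h1.2
    have hterm : ∀ k ∈ univ.image b,
        (((univ.filter (fun j => b j = k)).sup p : ℕ) : ℝ) ≤ C k := by
      intro k hk
      simp only [mem_image, mem_univ, true_and] at hk
      obtain ⟨j0, rfl⟩ := hk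
      obtain ⟨j, hjmem, hjsup⟩ :=
        Finset.exists_mem_eq_sup (univ.filter (fun j => b j = b j0)) ⟨j0, hmemfib j0⟩ p
      rw [hjsup]
      have hbj : b j = b j0 := (mem_filter.mp hjmem).2
      have hx : x j (b j0) = 1 := by rw [← hbj]; exact hb1 j
      have := hC j (b j0)
      rwa [hx, mul_one] at this
    have key : ((∑ S ∈ P'.parts, S.sup p : ℕ) : ℝ) ≤ ∑ k, C k := by
      rw [Nat.cast_sum, hsum_parts]
      calc ∑ k ∈ univ.image b, (((univ.filter (fun j => b j = k)).sup p : ℕ) : ℝ)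
          ≤ ∑ k ∈ univ.image b, C k := Finset.sum_le_sum hterm
        _ ≤ ∑ k, C k :=
            Finset.sum_le_sum_of_subset_of_nonneg (subset_univ _) fun k _ _ => hCnn k
    calc (Mopt : ℝ) ≤ ((∑ S ∈ P'.parts, S.sup p : ℕ) : ℝ) := by exact_mod_cast hMle
      _ ≤ ∑ k, C k := key
end

section
/- Assume the jobs are indexed 1, …, n so that p_1 ≤ p_2 ≤ … ≤ p_n. A feasible solution of (MILP1+) consists of x_{jk} ∈ {0,1} for all pairs 1 ≤ j ≤ k ≤ n satisfying: Σ_{k : k ≥ j} x_{jk} = 1 for every j, and Σ_{j : j ≤ k} s_j x_{jk} ≤ B·x_{kk} for every k. Then the minimum of Σ_{k=1}^{n} p_k x_{kk} over all feasible solutions of (MILP1+) is attained and equals the optimal makespan of the instance. -/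
open Finset

lemma max'_congr {α : Type*} [LinearOrder α] {S T : Finset α} (h : S = T) (hS : S.Nonempty) :
    S.max' hS = T.max' (h ▸ hS) := by subst h; rfl

lemma sup_eq_p_max {n : ℕ} (p : Fin n → ℕ) (hmono : Monotone p)
    (S : Finset (Fin n)) (hS : S.Nonempty) : S.sup p = p (S.max' hS) :=
  le_antisymm (Finset.sup_le fun j hj => hmono (S.le_max' j hj))
    (Finset.le_sup (S.max'_mem hS))

/-- Correctness of the symmetry-breaking formulation (MILP1+) of Trindade et al.
The jobs `1,…,n` are indexed so that the processing times `p` are monotone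
(`p 1 ≤ p 2 ≤ … ≤ p n`). A feasible solution consists of `x j k ∈ {0,1}` for `j ≤ k`
satisfying `∑ k ≥ j, x j k = 1` for every `j` and `∑ j ≤ k, s j * x j k ≤ B * x k k`
for every `k`. The minimum of `∑ k, p k * x k k` over all feasible solutions is attained
and equals the optimal makespan `Mopt` of the instance. -/
theorem MILP1plus_correct (n B : ℕ) (hn : 1 ≤ n) (hB : 1 ≤ B)
    (s p : Fin n → ℕ) (hs : ∀ j, 1 ≤ s j ∧ s j ≤ B) (hp : ∀ j, 1 ≤ p j)
    (hmono : Monotone p) (Mopt : ℕ)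
    (hopt : IsLeast {M : ℕ | ∃ P : Finpartition (univ : Finset (Fin n)),
        (∀ S ∈ P.parts, ∑ j ∈ S, s j ≤ B) ∧ ∑ S ∈ P.parts, S.sup p = M} Mopt) :
    IsLeast {m : ℕ | ∃ x : Fin n → Fin n → ℕ,
        (∀ j k : Fin n, j ≤ k → x j k ≤ 1) ∧
        (∀ j : Fin n, ∑ k ∈ univ.filter (fun k => j ≤ k), x j k = 1) ∧
        (∀ k : Fin n, ∑ j ∈ univ.filter (fun j => j ≤ k), s j * x j k ≤ B * x k k) ∧
        ∑ k, p k * x k k = m} Mopt := by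
  constructor
  · -- membership: build x from the optimal partition
    obtain ⟨P, hcap, hsum⟩ := hopt.1
    set g : Fin n → Fin n := fun j => (P.part j).max' ⟨j, P.mem_part (mem_univ j)⟩ with hg
    have hjg : ∀ j, j ≤ g j := fun j => Finset.le_max' _ j (P.mem_part (mem_univ j))
    have hpart : ∀ j, P.part (g j) = P.part j := by
      intro j
      exact P.part_eq_of_mem (P.part_mem.2 (mem_univ j)) (Finset.max'_mem _ _)
    have hgg : ∀ j, g (g j) = g j := by
      intro j; simp only [hg]; congr 1; exact hpart j
    refine ⟨fun j k => if g j = k then 1 else 0, ?_, ?_, ?_, ?_⟩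
    · intro j k _; dsimp only; split <;> simp
    · intro j
      rw [Finset.sum_ite_eq (univ.filter (fun k => j ≤ k)) (g j) (fun _ => 1)]
      simp [hjg j]
    · intro k
      by_cases hk : g k = k
      · have h1 : (univ.filter (fun j => j ≤ k)).filter (fun j => g j = k) = P.part k := by
          ext j
          simp only [mem_filter, mem_univ, true_and]
          constructor
          · rintro ⟨-, hgj⟩
            have : P.part k = P.part j := hgj ▸ hpart j
            rw [this]; exact P.mem_part (mem_univ j)
          · intro hj
            have hpj : P.part j = P.part k := P.part_eq_of_mem (P.part_mem.2 (mem_univ k)) hj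
            have : g j = g k := by simp only [hg]; congr 1
            refine ⟨?_, this.trans hk⟩
            calc j ≤ g j := hjg j
              _ = k := this.trans hk
        calc ∑ j ∈ univ.filter (fun j => j ≤ k), s j * (if g j = k then 1 else 0)
            = ∑ j ∈ univ.filter (fun j => j ≤ k), (if g j = k then s j else 0) := by
              apply Finset.sum_congr rfl; intro j _; split <;> simp
          _ = ∑ j ∈ (univ.filter (fun j => j ≤ k)).filter (fun j => g j = k), s j :=
              (Finset.sum_filter _ _).symm
          _ = ∑ j ∈ P.part k, s j := by rw [h1]
          _ ≤ B := hcap _ (P.part_mem.2 (mem_univ k))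
          _ = B * (if g k = k then 1 else 0) := by simp [hk]
      · have : ∀ j ∈ univ.filter (fun j => j ≤ k), s j * (if g j = k then 1 else 0) = 0 := by
          intro j _
          have : g j ≠ k := by
            intro hgj
            apply hk
            have : P.part k = P.part j := hgj ▸ hpart j
            have : g k = g j := by simp only [hg]; congr 1
            rw [this, hgj]
          simp [this]
        rw [Finset.sum_congr rfl this]
        simp
    · -- objective equals Mopt
      rw [← hsum]
      have h2 : ∑ k, p k * (if g k = k then 1 else 0)
          = ∑ k ∈ univ.filter (fun k => g k = k), p k := by
        rw [Finset.sum_filter]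
        apply Finset.sum_congr rfl; intro k _; split <;> simp
      rw [h2]
      refine Finset.sum_bij' (fun k _ => P.part k) (fun S hS => S.max' (P.nonempty_of_mem_parts hS)) ?_ ?_ ?_ ?_ ?_
      · intro k hk; exact P.part_mem.2 (mem_univ k)
      · intro S hS
        simp only [mem_filter, mem_univ, true_and]
        have hps : P.part (S.max' (P.nonempty_of_mem_parts hS)) = S :=
          P.part_eq_of_mem hS (Finset.max'_mem _ _)
        show (P.part (S.max' _)).max' _ = S.max' _
        exact max'_congr hps _
      · intro k hk
        simp only [mem_filter, mem_univ, true_and] at hk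
        exact hk
      · intro S hS
        exact P.part_eq_of_mem hS (Finset.max'_mem _ _)
      · intro k hk
        simp only [mem_filter, mem_univ, true_and] at hk
        rw [sup_eq_p_max p hmono _ ⟨k, P.mem_part (mem_univ k)⟩]
        exact congrArg p hk.symm
  · -- lower bound
    rintro m ⟨x, hx1, hx2, hx3, hx4⟩
    have hex : ∀ j : Fin n, ∃ k, (j ≤ k ∧ x j k = 1) := by
      intro j
      by_contra hcon
      push_neg at hcon
      have : ∑ k ∈ univ.filter (fun k => j ≤ k), x j k = 0 := by
        apply Finset.sum_eq_zero
        intro k hk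
        simp only [mem_filter, mem_univ, true_and] at hk
        have := hx1 j k hk
        have := hcon k hk
        omega
      rw [hx2 j] at this; exact one_ne_zero this
    choose f hf1 hf2 using hex
    have huniq : ∀ j k₁ k₂ : Fin n, j ≤ k₁ → j ≤ k₂ → x j k₁ = 1 → x j k₂ = 1 → k₁ = k₂ := by
      intro j k₁ k₂ h1 h2 e1 e2
      by_contra hne
      have hsub : ({k₁, k₂} : Finset (Fin n)) ⊆ univ.filter (fun k => j ≤ k) := by
        intro k hk
        simp only [mem_insert, mem_singleton] at hk
        simp only [mem_filter, mem_univ, true_and]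
        rcases hk with h | h <;> subst h <;> assumption
      have : ∑ k ∈ ({k₁, k₂} : Finset (Fin n)), x j k ≤ ∑ k ∈ univ.filter (fun k => j ≤ k), x j k :=
        Finset.sum_le_sum_of_subset hsub
      rw [Finset.sum_pair hne, hx2 j, e1, e2] at this
      omega
    have hfx : ∀ j k, j ≤ k → x j k = 1 → f j = k := fun j k h e =>
      huniq j (f j) k (hf1 j) h (hf2 j) e
    have hxkk : ∀ j, x (f j) (f j) = 1 := by
      intro j
      have hjmem : j ∈ univ.filter (fun i => i ≤ f j) := by
        simp [hf1 j]
      have hle : s j * x j (f j) ≤ ∑ i ∈ univ.filter (fun i => i ≤ f j), s i * x i (f j) :=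
        Finset.single_le_sum (f := fun i => s i * x i (f j)) (fun i _ => Nat.zero_le _) hjmem
      have hsum3 := hx3 (f j)
      have hs1 := (hs j).1
      have hub := hx1 (f j) (f j) le_rfl
      rw [hf2 j, mul_one] at hle
      have h1 : 1 ≤ B * x (f j) (f j) := le_trans hs1 (le_trans hle hsum3)
      have h0 : x (f j) (f j) ≠ 0 := by
        intro h0; rw [h0, mul_zero] at h1; omega
      omega
    have hffk : ∀ k, x k k = 1 → f k = k := fun k hk => hfx k k le_rfl hk
    set K : Finset (Fin n) := univ.filter (fun k => x k k = 1) with hK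
    set fib : Fin n → Finset (Fin n) := fun k => univ.filter (fun j => f j = k) with hfib
    have hkfib : ∀ k ∈ K, k ∈ fib k := by
      intro k hk
      simp only [hK, mem_filter, mem_univ, true_and] at hk
      simp [hfib, hffk k hk]
    have hfibinj : ∀ k₁ ∈ K, ∀ k₂ ∈ K, fib k₁ = fib k₂ → k₁ = k₂ := by
      intro k₁ h1 k₂ h2 he
      have := hkfib k₁ h1
      rw [he] at this
      simp only [hfib, mem_filter, mem_univ, true_and] at this
      have h1' : x k₁ k₁ = 1 := by simpa [hK] using h1
      rw [← this, hffk k₁ h1']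
    have hKmem : ∀ j, f j ∈ K := by
      intro j; simp only [hK, mem_filter, mem_univ, true_and]; exact hxkk j
    have hsi : (K.image fib).SupIndep id := by
      rw [Finset.supIndep_iff_pairwiseDisjoint]
      intro S hS T hT hne
      simp only [coe_image, Set.mem_image, mem_coe] at hS hT
      obtain ⟨k₁, hk1, rfl⟩ := hS
      obtain ⟨k₂, hk2, rfl⟩ := hT
      have hkne : k₁ ≠ k₂ := fun h => hne (by rw [h])
      simp only [Function.onFun, id]
      rw [Finset.disjoint_left]
      intro j hj1 hj2
      simp only [hfib, mem_filter, mem_univ, true_and] at hj1 hj2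
      exact hkne (hj1 ▸ hj2 ▸ rfl)
    have hsup : (K.image fib).sup id = (univ : Finset (Fin n)) := by
      apply Finset.eq_univ_iff_forall.mpr
      intro j
      rw [Finset.mem_sup]
      refine ⟨fib (f j), mem_image_of_mem fib (hKmem j), ?_⟩
      simp [hfib]
    have hbot : ⊥ ∉ K.image fib := by
      intro hbot
      simp only [mem_image] at hbot
      obtain ⟨k, hk, he⟩ := hbot
      have := hkfib k hk
      rw [he] at this
      simp at this
    set P : Finpartition (univ : Finset (Fin n)) := ⟨K.image fib, hsi, hsup, hbot⟩ with hPdef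
    have hP : P.parts = K.image fib := rfl
    have hcap : ∀ S ∈ P.parts, ∑ j ∈ S, s j ≤ B := by
      intro S hS
      rw [hP, mem_image] at hS
      obtain ⟨k, hk, rfl⟩ := hS
      have hk1 : x k k = 1 := by simpa [hK] using hk
      have hsub : fib k ⊆ univ.filter (fun j => j ≤ k) := by
        intro j hj
        simp only [hfib, mem_filter, mem_univ, true_and] at hj ⊢
        exact hj ▸ hf1 j
      calc ∑ j ∈ fib k, s j = ∑ j ∈ fib k, s j * x j k := by
            apply Finset.sum_congr rfl
            intro j hj
            simp only [hfib, mem_filter, mem_univ, true_and] at hj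
            rw [← hj, hf2 j, mul_one]
        _ ≤ ∑ j ∈ univ.filter (fun j => j ≤ k), s j * x j k :=
            Finset.sum_le_sum_of_subset hsub
        _ ≤ B * x k k := hx3 k
        _ = B := by rw [hk1, mul_one]
    have h5 : ∑ S ∈ P.parts, S.sup p ≤ m := by
      rw [hP, Finset.sum_image (fun k₁ h1 k₂ h2 he => hfibinj k₁ h1 k₂ h2 he)]
      calc ∑ k ∈ K, (fib k).sup p ≤ ∑ k ∈ K, p k := by
            apply Finset.sum_le_sum
            intro k hk
            apply Finset.sup_le
            intro j hj
            simp only [hfib, mem_filter, mem_univ, true_and] at hj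
            exact hmono (hj ▸ hf1 j)
        _ = ∑ k ∈ K, p k * x k k := by
            apply Finset.sum_congr rfl
            intro k hk
            simp only [hK, mem_filter, mem_univ, true_and] at hk
            rw [hk, mul_one]
        _ = ∑ k, p k * x k k := by
            apply Finset.sum_subset (Finset.subset_univ K)
            intro k _ hk
            simp only [hK, mem_filter, mem_univ, true_and] at hk
            have := hx1 k k le_rfl
            have : x k k = 0 := by omega
            rw [this, mul_zero]
        _ = m := hx4
    exact le_trans (hopt.2 ⟨P, hcap, rfl⟩) h5
end

section
/- Let δ ≥ 1 and θ ≥ 1 be integers, let J be a finite set, and let ℓ : J → {1,…,θ} and τ : J → {1,…,δ} be functions. Let a : {1,…,θ} × {1,…,δ} → ℕ satisfy, for every ℓ₀ ∈ {1,…,θ}: (i) Σ_{u=1}^{t} a(ℓ₀,u) ≤ #{j ∈ J : ℓ(j) = ℓ₀ and τ(j) ≤ t} for every t ∈ {1,…,δ}, and (ii) Σ_{u=1}^{δ} a(ℓ₀,u) = #{j ∈ J : ℓ(j) = ℓ₀}. Then there exists a function g : J → {1,…,θ} × {1,…,δ} such that for every j ∈ J, g(j) = (ℓ(j), t) for some t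 with t ≥ τ(j), and for every pair (ℓ₀,t), #{j ∈ J : g(j) = (ℓ₀,t)} = a(ℓ₀,t). -/
open Finset

lemma aux_assign (δ : ℕ) {J : Type*} [DecidableEq J] (τ : J → Fin δ) :
    ∀ (S : Finset J) (a : Fin δ → ℕ),
      (∀ t, ∑ u ∈ univ.filter (fun u => u ≤ t), a u
          ≤ (S.filter (fun j => τ j ≤ t)).card) →
      (∑ u, a u = S.card) →
      ∃ f : J → Fin δ, (∀ j ∈ S, τ j ≤ f j) ∧
        ∀ t, (S.filter (fun j => f j = t)).card = a t := by
  intro S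
  induction S using Finset.strongInduction with
  | _ S ih =>
    intro a hpre htot
    rcases S.eq_empty_or_nonempty with rfl | hS
    · refine ⟨τ, by simp, fun t => ?_⟩
      simp only [filter_empty, card_empty]
      have : ∑ u, a u = 0 := by simpa using htot
      exact (Finset.sum_eq_zero_iff.mp this t (mem_univ t)).symm ▸ rfl
    · -- total positive
      have hcard : 0 < S.card := card_pos.mpr hS
      have hsum : 0 < ∑ u, a u := htot ▸ hcard
      have hT : (univ.filter (fun t => a t ≠ 0)).Nonempty := by
        by_contra h
        simp only [not_nonempty_iff_eq_empty, filter_eq_empty_iff] at h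
        have : ∑ u, a u = 0 := Finset.sum_eq_zero (by intro u hu; simpa using h (mem_univ u))
        omega
      set t := (univ.filter (fun t => a t ≠ 0)).min' hT with ht
      have hat : a t ≠ 0 := by
        have := (univ.filter (fun t => a t ≠ 0)).min'_mem hT
        simpa using this
      have hmin : ∀ u, u < t → a u = 0 := by
        intro u hu
        by_contra h
        have : t ≤ u := Finset.min'_le _ u (by simpa using h)
        omega
      -- there is a job with τ j ≤ t
      have hpt := hpre t
      have hAt : 0 < ∑ u ∈ univ.filter (fun u => u ≤ t), a u := by
        calc 0 < a t := Nat.pos_of_ne_zero hat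
        _ ≤ _ := Finset.single_le_sum (f := a) (by intro i _; exact Nat.zero_le _)
              (by simp)
      have hjex : ∃ j ∈ S, τ j ≤ t := by
        have : 0 < (S.filter (fun j => τ j ≤ t)).card := lt_of_lt_of_le hAt hpt
        obtain ⟨j, hj⟩ := card_pos.mp this
        exact ⟨j, (mem_filter.mp hj).1, (mem_filter.mp hj).2⟩
      obtain ⟨j, hjS, hjt⟩ := hjex
      set a' := Function.update a t (a t - 1) with ha'
      have hsub : S.erase j ⊂ S := Finset.erase_ssubset hjS
      -- prefix condition for erase
      have hpre' : ∀ t', ∑ u ∈ univ.filter (fun u => u ≤ t'), a' u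
          ≤ ((S.erase j).filter (fun j' => τ j' ≤ t')).card := by
        intro t'
        rcases lt_or_ge t' t with h | h
        · have : ∑ u ∈ univ.filter (fun u => u ≤ t'), a' u = 0 := by
            apply Finset.sum_eq_zero
            intro u hu
            have hu' : u ≤ t' := by simpa using hu
            have hut : u < t := lt_of_le_of_lt hu' h
            have : u ≠ t := ne_of_lt hut
            simp [ha', Function.update_of_ne this, hmin u hut]
          omega
        · have htmem : t ∈ univ.filter (fun u => u ≤ t') := by simpa using h
          have hsum' : ∑ u ∈ univ.filter (fun u => u ≤ t'), a' u
              = (∑ u ∈ univ.filter (fun u => u ≤ t'), a u) - a t + (a t - 1) := by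
            have hsplit := Finset.sum_eq_sum_sdiff_singleton_add htmem a
            rw [ha', Finset.sum_update_of_mem htmem]
            omega
          have hAle : a t ≤ ∑ u ∈ univ.filter (fun u => u ≤ t'), a u :=
            Finset.single_le_sum (f := a) (fun i _ => Nat.zero_le _) htmem
          have hjf : j ∈ S.filter (fun j' => τ j' ≤ t') :=
            mem_filter.mpr ⟨hjS, le_trans hjt h⟩
          have hcf : ((S.erase j).filter (fun j' => τ j' ≤ t')).card
              = (S.filter (fun j' => τ j' ≤ t')).card - 1 := by
            rw [Finset.filter_erase]
            exact Finset.card_erase_of_mem hjf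
          have := hpre t'
          have hc1 : 0 < (S.filter (fun j' => τ j' ≤ t')).card := card_pos.mpr ⟨j, hjf⟩
          omega
      have htot' : ∑ u, a' u = (S.erase j).card := by
        have : ∑ u, a' u = (∑ u, a u) - a t + (a t - 1) := by
          have hsplit := Finset.sum_eq_sum_sdiff_singleton_add (mem_univ t) a
          rw [ha', Finset.sum_update_of_mem (mem_univ t)]
          omega
        have hAle : a t ≤ ∑ u, a u :=
          Finset.single_le_sum (f := a) (fun i _ => Nat.zero_le _) (mem_univ t)
        rw [Finset.card_erase_of_mem hjS]
        omega
      obtain ⟨f, hf1, hf2⟩ := ih (S.erase j) hsub a' hpre' htot'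
      refine ⟨Function.update f j t, ?_, ?_⟩
      · intro j' hj'
        rcases eq_or_ne j' j with rfl | h
        · simpa using hjt
        · rw [Function.update_of_ne h]
          exact hf1 j' (mem_erase.mpr ⟨h, hj'⟩)
      · intro t'
        have hset : S.filter (fun x => Function.update f j t x = t')
            = if t = t' then insert j ((S.erase j).filter (fun x => f x = t'))
              else (S.erase j).filter (fun x => f x = t') := by
          ext x
          rcases eq_or_ne t t' with rfl | hne
          · simp only [if_pos rfl, mem_insert, mem_filter, mem_erase]
            rcases eq_or_ne x j with rfl | hx
            · simp [hjS]
            · simp [Function.update_of_ne hx, hx]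
          · simp only [if_neg hne, mem_filter, mem_erase]
            rcases eq_or_ne x j with rfl | hx
            · simp [Function.update_self, hne]
            · simp [Function.update_of_ne hx, hx]
        rw [hset]
        rcases eq_or_ne t t' with rfl | hne
        · rw [if_pos rfl, Finset.card_insert_of_notMem (by simp)]
          rw [hf2 t]
          simp [ha', Function.update_self]
          omega
        · rw [if_neg hne, hf2 t']
          simp [ha', Function.update_of_ne (Ne.symm hne)]


/-- The combinatorial content of the paper's mapping of arc flows into job assignments
(Section 3.1). Jobs `j ∈ J` have a size class `ℓ j ∈ {1,…,θ}` (here `Fin θ`) and a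
processing-time index `τ j ∈ {1,…,δ}` (here `Fin δ`). Given slot counts
`a : Fin θ → Fin δ → ℕ` satisfying, for every size class `ℓ₀`:
(i) for every `t`, `∑ u ≤ t, a ℓ₀ u ≤ #{j : ℓ j = ℓ₀ ∧ τ j ≤ t}`, and
(ii) `∑ u, a ℓ₀ u = #{j : ℓ j = ℓ₀}`,
there is an assignment `g` of jobs to slots `(ℓ₀, t)` such that each job `j` goes to a
slot `(ℓ j, t)` with `τ j ≤ t`, and exactly `a ℓ₀ t` jobs go to slot `(ℓ₀, t)`. -/
theorem arcflow_slot_assignment (δ θ : ℕ) (hδ : 1 ≤ δ) (hθ : 1 ≤ θ)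
    {J : Type*} [Fintype J]
    (ℓ : J → Fin θ) (τ : J → Fin δ) (a : Fin θ → Fin δ → ℕ)
    (h1 : ∀ (ℓ₀ : Fin θ) (t : Fin δ),
      ∑ u ∈ univ.filter (fun u => u ≤ t), a ℓ₀ u
        ≤ (univ.filter (fun j => ℓ j = ℓ₀ ∧ τ j ≤ t)).card)
    (h2 : ∀ ℓ₀ : Fin θ, ∑ u, a ℓ₀ u = (univ.filter (fun j => ℓ j = ℓ₀)).card) :
    ∃ g : J → Fin θ × Fin δ,
      (∀ j, (g j).1 = ℓ j ∧ τ j ≤ (g j).2) ∧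
      (∀ (ℓ₀ : Fin θ) (t : Fin δ),
        (univ.filter (fun j => g j = (ℓ₀, t))).card = a ℓ₀ t) := by
  classical
  have key : ∀ ℓ₀ : Fin θ, ∃ f : J → Fin δ,
      (∀ j ∈ univ.filter (fun j => ℓ j = ℓ₀), τ j ≤ f j) ∧
      ∀ t, ((univ.filter (fun j => ℓ j = ℓ₀)).filter (fun j => f j = t)).card = a ℓ₀ t := by
    intro ℓ₀
    apply aux_assign δ τ (univ.filter (fun j => ℓ j = ℓ₀)) (a ℓ₀)
    · intro t
      rw [Finset.filter_filter]
      exact h1 ℓ₀ t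
    · exact h2 ℓ₀
  choose f hf1 hf2 using key
  refine ⟨fun j => (ℓ j, f (ℓ j) j), fun j => ⟨rfl, ?_⟩, fun ℓ₀ t => ?_⟩
  · exact hf1 (ℓ j) j (by simp)
  · rw [← hf2 ℓ₀ t, Finset.filter_filter]
    congr 1
    apply Finset.filter_congr
    intro j _
    constructor
    · rintro h; rw [Prod.ext_iff] at h; obtain ⟨h1', h2'⟩ := h
      simp at h1' h2'; subst h1'; exact ⟨rfl, h2'⟩
    · rintro ⟨h1', h2'⟩; subst h1'; simp [h2']
end

section
/- For every capacity-feasible schedule of an instance of 1|s_j,B|C_max with makespan M, there exists a feasible solution (f, y, v, z) of (FLOW) whose objective value Σ_{t=1}^{δ} P_t v_t equals M. -/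
open Finset

/-- The set of job arcs `A^J = {(i,j) : 0 ≤ i < j ≤ B, j - i = s k for some job k}`. -/
def flowAJ (n B : ℕ) (s : Fin n → ℕ) : Finset (ℕ × ℕ) :=
  ((Finset.range (B + 1)) ×ˢ (Finset.range (B + 1))).filter
    (fun q => q.1 < q.2 ∧ ∃ k : Fin n, q.2 - q.1 = s k)

/-- The set of loss arcs `A^L = {(i,B) : 1 ≤ i ≤ B-1}`. -/
def flowAL (B : ℕ) : Finset (ℕ × ℕ) :=
  ((Finset.range (B + 1)) ×ˢ (Finset.range (B + 1))).filter
    (fun q => 1 ≤ q.1 ∧ q.1 < B ∧ q.2 = B)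

/-- Feasibility for the formulation (FLOW).  Here `P : Fin δ → ℕ` lists the distinct
processing times `P_1 < … < P_δ` (the index `t : Fin δ` stands for the paper's `t+1`);
`f a t` is the flow of the job arc `a ∈ A^J` in structure `t`, `y a t` the flow on the
loss arc `a ∈ A^L`, `v t` the flow on the feedback arc, and `z c u`, for `u ∈ {0,…,δ}`
(the paper's `z_{c,u}` with conventions `z_{c,0} = z_{c,δ} = 0`), the number of jobs of
size `c` left over for structures with larger processing time.  The conditions are:
flows vanish off the arc sets, flow conservation at node `0` (total outflow `v t`), at
node `B` (total inflow `v t`) and at the interior nodes, and the job-balance equations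
`NT_{c,t} − ∑_{(i,j) ∈ A^J, j−i=c} f_{i,j,t} = z_{c,t} − z_{c,t−1}`. -/
def FlowFeasible (n B : ℕ) (s p : Fin n → ℕ) (δ : ℕ) (P : Fin δ → ℕ)
    (f y : ℕ × ℕ → Fin δ → ℕ) (v : Fin δ → ℕ) (z : ℕ → ℕ → ℕ) : Prop :=
  (∀ a t, a ∉ flowAJ n B s → f a t = 0) ∧
  (∀ a t, a ∉ flowAL B → y a t = 0) ∧
  (∀ c, z c 0 = 0) ∧ (∀ c, z c δ = 0) ∧
  (∀ t : Fin δ,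
    (∑ a ∈ (flowAJ n B s).filter (fun a => a.1 = 0), f a t)
      + (∑ a ∈ (flowAL B).filter (fun a => a.1 = 0), y a t) = v t) ∧
  (∀ t : Fin δ,
    (∑ a ∈ (flowAJ n B s).filter (fun a => a.2 = B), f a t)
      + (∑ a ∈ (flowAL B).filter (fun a => a.2 = B), y a t) = v t) ∧
  (∀ (t : Fin δ) (u : ℕ), 0 < u → u < B →
    (∑ a ∈ (flowAJ n B s).filter (fun a => a.2 = u), f a t)
      + (∑ a ∈ (flowAL B).filter (fun a => a.2 = u), y a t)
    = (∑ a ∈ (flowAJ n B s).filter (fun a => a.1 = u), f a t)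
      + (∑ a ∈ (flowAL B).filter (fun a => a.1 = u), y a t)) ∧
  (∀ (t : Fin δ) (c : ℕ), 1 ≤ c → c ≤ B →
    ((univ.filter (fun j => s j = c ∧ p j = P t)).card : ℤ)
      - ∑ a ∈ (flowAJ n B s).filter (fun a => a.2 - a.1 = c), (f a t : ℤ)
    = (z c (t.val + 1) : ℤ) - (z c t.val : ℤ))

/-- path flow of a batch, listed as a list of jobs, starting at node `i`. -/
def pfl (n : ℕ) (s : Fin n → ℕ) : ℕ → List (Fin n) → ℕ × ℕ → ℕ
  | _, [], _ => 0
  | i, j :: l, a => (if a = (i, i + s j) then 1 else 0) + pfl n s (i + s j) l a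

lemma pfl_support {n : ℕ} {s : Fin n → ℕ} (hs : ∀ j, 1 ≤ s j) :
    ∀ (i : ℕ) (l : List (Fin n)) (a : ℕ × ℕ), pfl n s i l a ≠ 0 →
      i ≤ a.1 ∧ a.1 < a.2 ∧ a.2 ≤ i + (l.map s).sum ∧ ∃ k, a.2 - a.1 = s k := by
  intro i l
  induction l generalizing i with
  | nil => intro a h; simp [pfl] at h
  | cons j l ih =>
    intro a h
    by_cases ha : a = (i, i + s j)
    · subst ha
      have := hs j
      refine ⟨le_refl _, show i < i + s j by omega,
        show i + s j ≤ i + (s j + (l.map s).sum) by omega, ⟨j, show i + s j - i = s j by omega⟩⟩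
    · have h' : pfl n s (i + s j) l a ≠ 0 := by
        simpa [pfl, ha] using h
      obtain ⟨h1, h2, h3, h4⟩ := ih (i + s j) a h'
      exact ⟨le_trans (Nat.le_add_right _ _) h1, h2, by simp [List.sum_cons]; omega, h4⟩

lemma pfl_balance {n B : ℕ} {s : Fin n → ℕ} :
    ∀ (i : ℕ) (l : List (Fin n)), i + (l.map s).sum ≤ B → ∀ (u : ℕ),
      (∑ a ∈ ((Finset.range (B+1)) ×ˢ (Finset.range (B+1))).filter (fun a => a.2 = u),
          pfl n s i l a) + (if i = u then 1 else 0)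
      = (∑ a ∈ ((Finset.range (B+1)) ×ˢ (Finset.range (B+1))).filter (fun a => a.1 = u),
          pfl n s i l a) + (if i + (l.map s).sum = u then 1 else 0) := by
  intro i l
  induction l generalizing i with
  | nil => intro _ u; simp [pfl]
  | cons j l ih =>
    intro hle u
    simp only [List.map_cons, List.sum_cons] at hle ⊢
    have hle' : (i + s j) + (l.map s).sum ≤ B := by omega
    have key := ih (i + s j) hle' u
    have hmem : (i, i + s j) ∈ (Finset.range (B+1)) ×ˢ (Finset.range (B+1)) := by
      simp only [Finset.mem_product, Finset.mem_range]; omega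
    have hin : (∑ a ∈ ((Finset.range (B+1)) ×ˢ (Finset.range (B+1))).filter
        (fun a => a.2 = u), if a = (i, i + s j) then 1 else 0) = if i + s j = u then 1 else 0 := by
      rw [Finset.sum_ite_eq']
      simp [Finset.mem_filter, hmem]
    have hout : (∑ a ∈ ((Finset.range (B+1)) ×ˢ (Finset.range (B+1))).filter
        (fun a => a.1 = u), if a = (i, i + s j) then 1 else 0) = if i = u then 1 else 0 := by
      rw [Finset.sum_ite_eq']
      simp [Finset.mem_filter, hmem]
    simp only [pfl, Finset.sum_add_distrib, hin, hout]
    split_ifs at key ⊢ <;> omega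

lemma pfl_count {n B : ℕ} {s : Fin n → ℕ} (hs : ∀ j, 1 ≤ s j) :
    ∀ (i : ℕ) (l : List (Fin n)), i + (l.map s).sum ≤ B → ∀ (c : ℕ),
      (∑ a ∈ (flowAJ n B s).filter (fun a => a.2 - a.1 = c), pfl n s i l a)
        = (l.filter (fun j => s j = c)).length := by
  intro i l
  induction l generalizing i with
  | nil => intro _ c; simp [pfl]
  | cons j l ih =>
    intro hle c
    simp only [List.map_cons, List.sum_cons] at hle
    have hle' : (i + s j) + (l.map s).sum ≤ B := by omega
    have key := ih (i + s j) hle' c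
    have hmem : (i, i + s j) ∈ flowAJ n B s := by
      have := hs j
      simp only [flowAJ, Finset.mem_filter, Finset.mem_product, Finset.mem_range]
      exact ⟨⟨by omega, by omega⟩, by omega, ⟨j, by omega⟩⟩
    have hin : (∑ a ∈ (flowAJ n B s).filter (fun a => a.2 - a.1 = c),
        if a = (i, i + s j) then 1 else 0) = if s j = c then 1 else 0 := by
      rw [Finset.sum_ite_eq']
      have : i + s j - i = s j := by omega
      simp [Finset.mem_filter, hmem, this]
    simp only [pfl, Finset.sum_add_distrib, hin, key, List.filter_cons]
    by_cases hc : s j = c <;> simp [hc] <;> omega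

lemma sum_filter_subset_eq {α : Type*} [DecidableEq α] {T T' : Finset α} (hT : T ⊆ T')
    (g : α → ℕ) (hg : ∀ a, a ∉ T → g a = 0) (q : α → Prop) [DecidablePred q] :
    ∑ a ∈ T'.filter q, g a = ∑ a ∈ T.filter q, g a :=
  (Finset.sum_subset (Finset.filter_subset_filter q hT)
    (fun a ha hna => hg a (fun h => hna (Finset.mem_filter.mpr
      ⟨h, (Finset.mem_filter.mp ha).2⟩)))).symm

/-- For every capacity-feasible schedule of an instance of `1|s_j,B|C_max` with
makespan `M`, there exists a feasible solution `(f, y, v, z)` of (FLOW) whose objective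
value `∑ t, P t * v t` equals `M`.  Schedules are `Finpartition`s of the job set;
the makespan is `∑ S ∈ Q.parts, S.sup p`; `P : Fin δ → ℕ` enumerates, strictly
increasingly, exactly the distinct values among the processing times `p j`. -/
theorem schedule_to_flow (n B : ℕ) (hn : 1 ≤ n) (hB : 1 ≤ B)
    (s p : Fin n → ℕ) (hs : ∀ j, 1 ≤ s j ∧ s j ≤ B) (hp : ∀ j, 1 ≤ p j)
    (δ : ℕ) (P : Fin δ → ℕ) (hPmono : StrictMono P)
    (hPmem : ∀ t, ∃ j, p j = P t) (hPall : ∀ j, ∃ t, p j = P t)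
    (Q : Finpartition (univ : Finset (Fin n)))
    (hQ : ∀ S ∈ Q.parts, ∑ j ∈ S, s j ≤ B)
    (M : ℕ) (hM : ∑ S ∈ Q.parts, S.sup p = M) :
    ∃ (f y : ℕ × ℕ → Fin δ → ℕ) (v : Fin δ → ℕ) (z : ℕ → ℕ → ℕ),
      FlowFeasible n B s p δ P f y v z ∧ ∑ t, P t * v t = M := by
  classical
  have hδ : 0 < δ := (hPall ⟨0, hn⟩).choose.pos
  set px : Fin n → Fin δ := fun j => (hPall j).choose with hpxdef
  have hpx : ∀ j, p j = P (px j) := fun j => (hPall j).choose_spec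
  set bx : Finset (Fin n) → Fin δ :=
    fun S => if h : ∃ t, S.sup p = P t then h.choose else ⟨0, hδ⟩ with hbxdef
  have hbx : ∀ S ∈ Q.parts, S.sup p = P (bx S) := by
    intro S hS
    obtain ⟨j, hj, hsup⟩ := Finset.exists_mem_eq_sup S (Q.nonempty_of_mem_parts hS) p
    have h : ∃ t, S.sup p = P t := ⟨px j, by rw [hsup, hpx]⟩
    simp only [hbxdef, dif_pos h]
    exact h.choose_spec
  set pt : Fin n → Finset (Fin n) :=
    fun j => ((Q.existsUnique_mem (mem_univ j)).exists).choose with hptdef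
  have hpt : ∀ j, pt j ∈ Q.parts ∧ j ∈ pt j :=
    fun j => ((Q.existsUnique_mem (mem_univ j)).exists).choose_spec
  have hptu : ∀ (j : Fin n) (S : Finset (Fin n)), S ∈ Q.parts → j ∈ S → S = pt j := by
    intro j S hS hj
    exact (Q.existsUnique_mem (mem_univ j)).unique ⟨hS, hj⟩ ⟨(hpt j).1, (hpt j).2⟩
  have hs1 : ∀ j, 1 ≤ s j := fun j => (hs j).1
  have hab : ∀ j, (px j : ℕ) ≤ (bx (pt j) : ℕ) := by
    intro j
    have h1 : p j ≤ (pt j).sup p := Finset.le_sup (hpt j).2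
    rw [hpx j, hbx _ (hpt j).1] at h1
    exact hPmono.le_iff_le.mp h1
  set TS : Finset (Fin n) → ℕ := fun S => ∑ j ∈ S, s j with hTSdef
  have hsort_sum : ∀ S : Finset (Fin n), ((S.sort (·≤·)).map s).sum = TS S := by
    intro S
    rw [← Multiset.sum_coe, ← Multiset.map_coe, Finset.sort_eq]
    rfl
  have hsort_count : ∀ (S : Finset (Fin n)) (c : ℕ),
      ((S.sort (·≤·)).filter (fun j => s j = c)).length
        = (S.filter (fun j => s j = c)).card := by
    intro S c
    rw [← Multiset.coe_card, ← Multiset.filter_coe, Finset.sort_eq]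
    rfl
  have hTS1 : ∀ S ∈ Q.parts, 1 ≤ TS S := by
    intro S hS
    obtain ⟨j, hj⟩ := Q.nonempty_of_mem_parts hS
    exact le_trans (hs1 j) (Finset.single_le_sum (fun i _ => Nat.zero_le _) hj)
  have hTSB : ∀ S ∈ Q.parts, TS S ≤ B := hQ
  have hsupp : ∀ S ∈ Q.parts, ∀ a, pfl n s 0 (S.sort (·≤·)) a ≠ 0 → a ∈ flowAJ n B s := by
    intro S hS a h
    obtain ⟨h1, h2, h3, k, hk⟩ := pfl_support hs1 0 _ a h
    rw [hsort_sum] at h3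
    have hb := hTSB S hS
    simp only [flowAJ, mem_filter, mem_product, mem_range]
    exact ⟨⟨by omega, by omega⟩, h2, k, hk⟩
  have hbatch : ∀ S ∈ Q.parts, ∀ u : ℕ,
      (∑ a ∈ ((Finset.range (B+1)) ×ˢ (Finset.range (B+1))).filter (fun a => a.2 = u),
          pfl n s 0 (S.sort (·≤·)) a)
        + ((∑ a ∈ ((Finset.range (B+1)) ×ˢ (Finset.range (B+1))).filter (fun a => a.2 = u),
            if a = (TS S, B) ∧ TS S < B then 1 else 0)
        + (if 0 = u then 1 else 0))
      = (∑ a ∈ ((Finset.range (B+1)) ×ˢ (Finset.range (B+1))).filter (fun a => a.1 = u),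
          pfl n s 0 (S.sort (·≤·)) a)
        + ((∑ a ∈ ((Finset.range (B+1)) ×ˢ (Finset.range (B+1))).filter (fun a => a.1 = u),
            if a = (TS S, B) ∧ TS S < B then 1 else 0)
        + (if B = u then 1 else 0)) := by
    intro S hS u
    have hle : 0 + ((S.sort (·≤·)).map s).sum ≤ B := by
      rw [hsort_sum]; simpa using hTSB S hS
    have hb := pfl_balance 0 (S.sort (·≤·)) hle u
    rw [hsort_sum, zero_add] at hb
    have hmem : (TS S, B) ∈ (Finset.range (B+1)) ×ˢ (Finset.range (B+1)) := by
      have := hTSB S hS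
      simp only [mem_product, mem_range]; omega
    by_cases hTB : TS S < B
    · have hin : (∑ a ∈ ((Finset.range (B+1)) ×ˢ (Finset.range (B+1))).filter
          (fun a => a.2 = u), if a = (TS S, B) ∧ TS S < B then 1 else 0)
          = if B = u then 1 else 0 := by
        simp only [hTB, and_true]
        rw [Finset.sum_ite_eq']
        simp [Finset.mem_filter, hmem]
      have hout : (∑ a ∈ ((Finset.range (B+1)) ×ˢ (Finset.range (B+1))).filter
          (fun a => a.1 = u), if a = (TS S, B) ∧ TS S < B then 1 else 0)
          = if TS S = u then 1 else 0 := by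
        simp only [hTB, and_true]
        rw [Finset.sum_ite_eq']
        simp [Finset.mem_filter, hmem]
      rw [hin, hout]
      split_ifs at hb ⊢ <;> omega
    · have hTBe : TS S = B := by have := hTSB S hS; omega
      simp only [hTB, and_false, if_false, Finset.sum_const_zero, zero_add]
      rw [hTBe] at hb
      split_ifs at hb ⊢ <;> omega
  have hcardsum : ∀ (t : Fin δ) (c : ℕ),
      (∑ S ∈ Q.parts.filter (fun S => bx S = t), (S.filter (fun j => s j = c)).card)
        = (univ.filter (fun j => s j = c ∧ (bx (pt j) : ℕ) = (t : ℕ))).card := by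
    intro t c
    rw [← Finset.card_biUnion]
    · congr 1
      ext j
      simp only [mem_biUnion, mem_filter, mem_univ, true_and]
      constructor
      · rintro ⟨S, ⟨hS1, hS2⟩, hjS, hjc⟩
        exact ⟨hjc, by rw [← hptu j S hS1 hjS, hS2]⟩
      · rintro ⟨hjc, hbt⟩
        exact ⟨pt j, ⟨(hpt j).1, Fin.ext hbt⟩, (hpt j).2, hjc⟩
    · intro S hS S' hS' hne
      exact Finset.disjoint_filter_filter
        (Q.disjoint (mem_filter.mp hS).1 (mem_filter.mp hS').1 hne)
  have hNT : ∀ (t : Fin δ) (c : ℕ),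
      (univ.filter (fun j => s j = c ∧ p j = P t)).card
        = (univ.filter (fun j => s j = c ∧ (px j : ℕ) = (t : ℕ))).card := by
    intro t c
    congr 1
    apply Finset.filter_congr
    intro j _
    have : p j = P t ↔ (px j : ℕ) = (t : ℕ) := by
      rw [hpx j, hPmono.injective.eq_iff, Fin.val_eq_val]
    rw [this]
  have hbalj : ∀ (t : Fin δ) (c : ℕ),
      (univ.filter (fun j => s j = c ∧ (px j : ℕ) = (t : ℕ))).card
        + (univ.filter (fun j => s j = c ∧ (px j : ℕ) < (t : ℕ) ∧ (t : ℕ) ≤ (bx (pt j) : ℕ))).card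
      = (univ.filter (fun j => s j = c ∧ (bx (pt j) : ℕ) = (t : ℕ))).card
        + (univ.filter (fun j => s j = c ∧ (px j : ℕ) < (t : ℕ) + 1
            ∧ (t : ℕ) + 1 ≤ (bx (pt j) : ℕ))).card := by
    intro t c
    simp only [Finset.card_filter, ← Finset.sum_add_distrib]
    refine Finset.sum_congr rfl fun j _ => ?_
    have := hab j
    split_ifs <;> omega

  have hfAJ : ∀ (a : ℕ × ℕ) (t : Fin δ), a ∉ flowAJ n B s →
      (∑ S ∈ Q.parts.filter (fun S => bx S = t), pfl n s 0 (S.sort (·≤·)) a) = 0 := by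
    intro a t ha
    refine Finset.sum_eq_zero fun S hS => ?_
    by_contra h
    exact ha (hsupp S (mem_filter.mp hS).1 a h)
  have hyAL : ∀ (a : ℕ × ℕ) (t : Fin δ), a ∉ flowAL B →
      (∑ S ∈ Q.parts.filter (fun S => bx S = t),
        if a = (TS S, B) ∧ TS S < B then 1 else 0) = 0 := by
    intro a t ha
    refine Finset.sum_eq_zero fun S hS => ?_
    rw [if_neg]
    rintro ⟨rfl, hlt⟩
    have h1 := hTS1 S (mem_filter.mp hS).1
    refine ha ?_
    simp only [flowAL, mem_filter, mem_product, mem_range]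
    exact ⟨⟨by omega, by omega⟩, h1, hlt, by simp⟩
  have hcons : ∀ (t : Fin δ) (u : ℕ),
      (∑ a ∈ ((Finset.range (B+1)) ×ˢ (Finset.range (B+1))).filter (fun a => a.2 = u),
          ∑ S ∈ Q.parts.filter (fun S => bx S = t), pfl n s 0 (S.sort (·≤·)) a)
        + ((∑ a ∈ ((Finset.range (B+1)) ×ˢ (Finset.range (B+1))).filter (fun a => a.2 = u),
            ∑ S ∈ Q.parts.filter (fun S => bx S = t),
              if a = (TS S, B) ∧ TS S < B then 1 else 0)
        + (if 0 = u then (Q.parts.filter (fun S => bx S = t)).card else 0))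
      = (∑ a ∈ ((Finset.range (B+1)) ×ˢ (Finset.range (B+1))).filter (fun a => a.1 = u),
          ∑ S ∈ Q.parts.filter (fun S => bx S = t), pfl n s 0 (S.sort (·≤·)) a)
        + ((∑ a ∈ ((Finset.range (B+1)) ×ˢ (Finset.range (B+1))).filter (fun a => a.1 = u),
            ∑ S ∈ Q.parts.filter (fun S => bx S = t),
              if a = (TS S, B) ∧ TS S < B then 1 else 0)
        + (if B = u then (Q.parts.filter (fun S => bx S = t)).card else 0)) := by
    intro t u
    have c1 : (∑ a ∈ ((Finset.range (B+1)) ×ˢ (Finset.range (B+1))).filter (fun a => a.2 = u),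
          ∑ S ∈ Q.parts.filter (fun S => bx S = t), pfl n s 0 (S.sort (·≤·)) a)
        = ∑ S ∈ Q.parts.filter (fun S => bx S = t),
            ∑ a ∈ ((Finset.range (B+1)) ×ˢ (Finset.range (B+1))).filter (fun a => a.2 = u),
              pfl n s 0 (S.sort (·≤·)) a := Finset.sum_comm
    have c2 : (∑ a ∈ ((Finset.range (B+1)) ×ˢ (Finset.range (B+1))).filter (fun a => a.2 = u),
          ∑ S ∈ Q.parts.filter (fun S => bx S = t),
            if a = (TS S, B) ∧ TS S < B then 1 else 0)
        = ∑ S ∈ Q.parts.filter (fun S => bx S = t),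
            ∑ a ∈ ((Finset.range (B+1)) ×ˢ (Finset.range (B+1))).filter (fun a => a.2 = u),
              if a = (TS S, B) ∧ TS S < B then 1 else 0 := Finset.sum_comm
    have c3 : (∑ a ∈ ((Finset.range (B+1)) ×ˢ (Finset.range (B+1))).filter (fun a => a.1 = u),
          ∑ S ∈ Q.parts.filter (fun S => bx S = t), pfl n s 0 (S.sort (·≤·)) a)
        = ∑ S ∈ Q.parts.filter (fun S => bx S = t),
            ∑ a ∈ ((Finset.range (B+1)) ×ˢ (Finset.range (B+1))).filter (fun a => a.1 = u),
              pfl n s 0 (S.sort (·≤·)) a := Finset.sum_comm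
    have c4 : (∑ a ∈ ((Finset.range (B+1)) ×ˢ (Finset.range (B+1))).filter (fun a => a.1 = u),
          ∑ S ∈ Q.parts.filter (fun S => bx S = t),
            if a = (TS S, B) ∧ TS S < B then 1 else 0)
        = ∑ S ∈ Q.parts.filter (fun S => bx S = t),
            ∑ a ∈ ((Finset.range (B+1)) ×ˢ (Finset.range (B+1))).filter (fun a => a.1 = u),
              if a = (TS S, B) ∧ TS S < B then 1 else 0 := Finset.sum_comm
    have h1 : (if 0 = u then (Q.parts.filter (fun S => bx S = t)).card else 0)
        = ∑ _S ∈ Q.parts.filter (fun S => bx S = t), (if 0 = u then 1 else 0) := by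
      rw [Finset.sum_const, smul_eq_mul]; split_ifs <;> omega
    have h2 : (if B = u then (Q.parts.filter (fun S => bx S = t)).card else 0)
        = ∑ _S ∈ Q.parts.filter (fun S => bx S = t), (if B = u then 1 else 0) := by
      rw [Finset.sum_const, smul_eq_mul]; split_ifs <;> omega
    rw [c1, c2, c3, c4, h1, h2, ← Finset.sum_add_distrib, ← Finset.sum_add_distrib,
      ← Finset.sum_add_distrib, ← Finset.sum_add_distrib]
    exact Finset.sum_congr rfl fun S hS => hbatch S (mem_filter.mp hS).1 u
  have hAJsub : flowAJ n B s ⊆ (Finset.range (B+1)) ×ˢ (Finset.range (B+1)) :=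
    Finset.filter_subset _ _
  have hALsub : flowAL B ⊆ (Finset.range (B+1)) ×ˢ (Finset.range (B+1)) :=
    Finset.filter_subset _ _
  refine ⟨fun a t => ∑ S ∈ Q.parts.filter (fun S => bx S = t), pfl n s 0 (S.sort (·≤·)) a,
    fun a t => ∑ S ∈ Q.parts.filter (fun S => bx S = t),
      if a = (TS S, B) ∧ TS S < B then 1 else 0,
    fun t => (Q.parts.filter (fun S => bx S = t)).card,
    fun c u => (univ.filter (fun j => s j = c ∧ (px j : ℕ) < u ∧ u ≤ (bx (pt j) : ℕ))).card,
    ⟨hfAJ, hyAL, ?_, ?_, ?_, ?_, ?_, ?_⟩, ?_⟩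
  · intro c
    simp
  · intro c
    refine Finset.card_eq_zero.mpr (Finset.filter_eq_empty_iff.mpr fun j _ => ?_)
    rintro ⟨-, -, h⟩
    exact absurd h (by have := (bx (pt j)).isLt; omega)
  · -- node 0
    intro t
    beta_reduce
    rw [← sum_filter_subset_eq hAJsub _ (fun a ha => hfAJ a t ha)
        (fun a => a.1 = 0),
      ← sum_filter_subset_eq hALsub _ (fun a ha => hyAL a t ha)
        (fun a => a.1 = 0)]
    have hc := hcons t 0
    have hz1 : (∑ a ∈ ((Finset.range (B+1)) ×ˢ (Finset.range (B+1))).filter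
        (fun a => a.2 = 0), ∑ S ∈ Q.parts.filter (fun S => bx S = t),
          pfl n s 0 (S.sort (·≤·)) a) = 0 := by
      refine Finset.sum_eq_zero fun a ha => Finset.sum_eq_zero fun S hS => ?_
      by_contra h
      have hm := hsupp S (mem_filter.mp hS).1 a h
      simp only [flowAJ, mem_filter, mem_product, mem_range] at hm
      have h2 := (mem_filter.mp ha).2
      omega
    have hz2 : (∑ a ∈ ((Finset.range (B+1)) ×ˢ (Finset.range (B+1))).filter
        (fun a => a.2 = 0), ∑ S ∈ Q.parts.filter (fun S => bx S = t),
          if a = (TS S, B) ∧ TS S < B then 1 else 0) = 0 := by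
      refine Finset.sum_eq_zero fun a ha => Finset.sum_eq_zero fun S hS => ?_
      rw [if_neg]
      rintro ⟨rfl, hlt⟩
      have h2 := (mem_filter.mp ha).2
      simp at h2
      omega
    rw [hz1, hz2, if_pos rfl, if_neg (by omega)] at hc
    omega
  · -- node B
    intro t
    beta_reduce
    rw [← sum_filter_subset_eq hAJsub _ (fun a ha => hfAJ a t ha)
        (fun a => a.2 = B),
      ← sum_filter_subset_eq hALsub _ (fun a ha => hyAL a t ha)
        (fun a => a.2 = B)]
    have hc := hcons t B
    have hz3 : (∑ a ∈ ((Finset.range (B+1)) ×ˢ (Finset.range (B+1))).filter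
        (fun a => a.1 = B), ∑ S ∈ Q.parts.filter (fun S => bx S = t),
          pfl n s 0 (S.sort (·≤·)) a) = 0 := by
      refine Finset.sum_eq_zero fun a ha => Finset.sum_eq_zero fun S hS => ?_
      by_contra h
      have hm := hsupp S (mem_filter.mp hS).1 a h
      simp only [flowAJ, mem_filter, mem_product, mem_range] at hm
      have h2 := (mem_filter.mp ha).2
      omega
    have hz4 : (∑ a ∈ ((Finset.range (B+1)) ×ˢ (Finset.range (B+1))).filter
        (fun a => a.1 = B), ∑ S ∈ Q.parts.filter (fun S => bx S = t),
          if a = (TS S, B) ∧ TS S < B then 1 else 0) = 0 := by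
      refine Finset.sum_eq_zero fun a ha => Finset.sum_eq_zero fun S hS => ?_
      rw [if_neg]
      rintro ⟨rfl, hlt⟩
      have h2 := (mem_filter.mp ha).2
      simp at h2
      omega
    rw [hz3, hz4, if_pos rfl, if_neg (by omega)] at hc
    omega
  · -- interior
    intro t u hu0 huB
    beta_reduce
    rw [← sum_filter_subset_eq hAJsub _ (fun a ha => hfAJ a t ha)
        (fun a => a.2 = u),
      ← sum_filter_subset_eq hALsub _ (fun a ha => hyAL a t ha)
        (fun a => a.2 = u),
      ← sum_filter_subset_eq hAJsub _ (fun a ha => hfAJ a t ha)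
        (fun a => a.1 = u),
      ← sum_filter_subset_eq hALsub _ (fun a ha => hyAL a t ha)
        (fun a => a.1 = u)]
    have hc := hcons t u
    rw [if_neg (by omega), if_neg (by omega)] at hc
    omega
  · -- job balance
    intro t c hc1 hcB
    beta_reduce
    have hF : (∑ a ∈ (flowAJ n B s).filter (fun a => a.2 - a.1 = c),
        ∑ S ∈ Q.parts.filter (fun S => bx S = t), pfl n s 0 (S.sort (·≤·)) a)
        = (univ.filter (fun j => s j = c ∧ (bx (pt j) : ℕ) = (t : ℕ))).card := by
      have c5 : (∑ a ∈ (flowAJ n B s).filter (fun a => a.2 - a.1 = c),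
          ∑ S ∈ Q.parts.filter (fun S => bx S = t), pfl n s 0 (S.sort (·≤·)) a)
          = ∑ S ∈ Q.parts.filter (fun S => bx S = t),
              ∑ a ∈ (flowAJ n B s).filter (fun a => a.2 - a.1 = c),
                pfl n s 0 (S.sort (·≤·)) a := Finset.sum_comm
      rw [c5, Finset.sum_congr rfl (fun S hS => ?_), hcardsum t c]
      rw [pfl_count hs1 0 _ (by rw [hsort_sum]; simpa using hTSB S (mem_filter.mp hS).1) c,
        hsort_count]
    have hcast : (∑ a ∈ (flowAJ n B s).filter (fun a => a.2 - a.1 = c),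
        ((∑ S ∈ Q.parts.filter (fun S => bx S = t), pfl n s 0 (S.sort (·≤·)) a : ℕ) : ℤ))
        = ((univ.filter (fun j => s j = c ∧ (bx (pt j) : ℕ) = (t : ℕ))).card : ℤ) := by
      rw [← Nat.cast_sum, hF]
    rw [hcast, hNT t c]
    have := hbalj t c
    omega
  · -- objective
    have hobj : ∀ t : Fin δ, P t * (Q.parts.filter (fun S => bx S = t)).card
        = ∑ S ∈ Q.parts.filter (fun S => bx S = t), S.sup p := by
      intro t
      rw [Finset.sum_congr rfl (fun S hS => show S.sup p = P t from
        (hbx S (mem_filter.mp hS).1).trans (by rw [(mem_filter.mp hS).2])),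
        Finset.sum_const, smul_eq_mul, mul_comm]
    rw [Finset.sum_congr rfl (fun t _ => hobj t)]
    rw [Finset.sum_fiberwise Q.parts bx (fun S => S.sup p)]
    exact hM
end

section
/- For every feasible solution (f, y, v, z) of (FLOW), there exists a capacity-feasible schedule of the instance whose makespan is at most the objective value Σ_{t=1}^{δ} P_t v_t. -/
open Finset

/-- Elementary arcs: strictly increasing pairs within `{0,…,B}`. -/
def flowE (B : ℕ) : Finset (ℕ × ℕ) :=
  ((Finset.range (B + 1)) ×ˢ (Finset.range (B + 1))).filter (fun a => a.1 < a.2)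

lemma mem_flowE {B : ℕ} {a : ℕ × ℕ} : a ∈ flowE B ↔ a.1 < a.2 ∧ a.2 ≤ B := by
  simp only [flowE, Finset.mem_filter, Finset.mem_product, Finset.mem_range, Nat.lt_succ_iff]
  constructor
  · rintro ⟨⟨h1, h2⟩, h3⟩; exact ⟨h3, h2⟩
  · rintro ⟨h1, h2⟩; exact ⟨⟨by omega, h2⟩, h1⟩

lemma fsum_count_eq (F : Finset (ℕ × ℕ)) (C : Multiset (ℕ × ℕ)) :
    ∑ a ∈ F, C.count a = C.countP (· ∈ F) := by
  induction C using Multiset.induction_on with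
  | empty => simp
  | cons b C ih =>
    simp only [Multiset.count_cons, Multiset.countP_cons]
    rw [Finset.sum_add_distrib, ih, Finset.sum_ite_eq' F b (fun _ => 1)]

lemma fsum_count_mul (F : Finset (ℕ × ℕ)) (w : ℕ × ℕ → ℕ) (C : Multiset (ℕ × ℕ))
    (h : ∀ a ∈ C, a ∈ F) : ∑ a ∈ F, C.count a * w a = (C.map w).sum := by
  induction C using Multiset.induction_on with
  | empty => simp
  | cons b C ih =>
    simp only [Multiset.count_cons, Multiset.map_cons, Multiset.sum_cons, add_mul]
    rw [Finset.sum_add_distrib, ih (fun a ha => h a (Multiset.mem_cons_of_mem ha)), add_comm]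
    congr 1
    simp only [ite_mul, one_mul, zero_mul]
    rw [Finset.sum_ite_eq' F b w, if_pos (h b (Multiset.mem_cons_self b C))]

lemma nat_sum_sub {α : Type*} (F : Finset α) (f g : α → ℕ) (h : ∀ a ∈ F, g a ≤ f a) :
    ∑ a ∈ F, (f a - g a) = ∑ a ∈ F, f a - ∑ a ∈ F, g a := by
  have h2 : ∑ a ∈ F, (f a - g a) + ∑ a ∈ F, g a = ∑ a ∈ F, f a := by
    rw [← Finset.sum_add_distrib]
    exact Finset.sum_congr rfl fun a ha => Nat.sub_add_cancel (h a ha)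
  omega

lemma flow_walk (B : ℕ) (g : ℕ × ℕ → ℕ)
    (hsup : ∀ a, g a ≠ 0 → a ∈ flowE B)
    (hcons : ∀ u, 0 < u → u < B →
      ∑ a ∈ (flowE B).filter (fun a => a.2 = u), g a
        = ∑ a ∈ (flowE B).filter (fun a => a.1 = u), g a) :
    ∀ (m u : ℕ), B - u ≤ m → u < B →
      1 ≤ ∑ a ∈ (flowE B).filter (fun a => a.1 = u), g a →
      ∃ C : Multiset (ℕ × ℕ),
        (∀ a, C.count a ≤ g a) ∧
        (∀ a ∈ C, a ∈ flowE B ∧ u ≤ a.1) ∧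
        (C.map (fun a => a.2 - a.1)).sum = B - u ∧
        (∀ w, w < B → C.countP (fun a => a.1 = w)
            = (if w = u then 1 else 0) + C.countP (fun a => a.2 = w)) ∧
        C.countP (fun a => a.2 = B) = 1 := by
  intro m
  induction m with
  | zero => intro u hm hu; omega
  | succ m ih =>
    intro u hm hu hout
    obtain ⟨a, haF, hga⟩ : ∃ a ∈ (flowE B).filter (fun a => a.1 = u), g a ≠ 0 := by
      apply Finset.exists_ne_zero_of_sum_ne_zero; omega
    obtain ⟨haE, ha1⟩ := Finset.mem_filter.1 haF
    obtain ⟨hlt, hle⟩ := mem_flowE.1 haE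
    by_cases hB2 : a.2 = B
    · refine ⟨{a}, ?_, ?_, ?_, ?_, ?_⟩
      · intro b
        rw [Multiset.count_singleton]
        split
        · next h => subst h; omega
        · omega
      · intro b hb
        rw [Multiset.mem_singleton] at hb
        subst hb; exact ⟨haE, ha1.ge⟩
      · simp only [Multiset.map_singleton, Multiset.sum_singleton]
        omega
      · intro w hw
        rw [show ({a} : Multiset (ℕ × ℕ)) = a ::ₘ 0 from rfl]
        rw [Multiset.countP_cons, Multiset.countP_cons, Multiset.countP_zero]
        have : ¬ (a.2 = w) := by omega
        rw [if_neg this]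
        by_cases h1 : a.1 = w
        · rw [if_pos h1, if_pos (by omega)]; simp
        · rw [if_neg h1, if_neg (by omega)]; simp
      · rw [show ({a} : Multiset (ℕ × ℕ)) = a ::ₘ 0 from rfl]
        rw [Multiset.countP_cons, Multiset.countP_zero, if_pos hB2]
    · have hin : 1 ≤ ∑ b ∈ (flowE B).filter (fun b => b.2 = a.2), g b := by
        have hmem : a ∈ (flowE B).filter (fun b => b.2 = a.2) :=
          Finset.mem_filter.2 ⟨haE, rfl⟩
        have := Finset.single_le_sum (f := g) (fun b _ => Nat.zero_le _) hmem
        omega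
      have hout2 : 1 ≤ ∑ b ∈ (flowE B).filter (fun b => b.1 = a.2), g b := by
        rw [← hcons a.2 (by omega) (by omega)]; exact hin
      obtain ⟨C1, hC1, hC2, hC3, hC4, hC5⟩ :=
        ih a.2 (by omega) (by omega) hout2
      refine ⟨a ::ₘ C1, ?_, ?_, ?_, ?_, ?_⟩
      · intro b
        rw [Multiset.count_cons]
        by_cases hb : b = a
        · subst hb
          have : b ∉ C1 := by
            intro hmem
            have := (hC2 b hmem).2
            omega
          rw [Multiset.count_eq_zero_of_notMem this]
          simp; omega
        · rw [if_neg hb]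
          have := hC1 b
          omega
      · intro b hb
        rcases Multiset.mem_cons.1 hb with h | h
        · subst h; exact ⟨haE, ha1.ge⟩
        · exact ⟨(hC2 b h).1, by have := (hC2 b h).2; omega⟩
      · rw [Multiset.map_cons, Multiset.sum_cons, hC3]
        omega
      · intro w hw
        rw [Multiset.countP_cons, Multiset.countP_cons]
        have h4 := hC4 w hw
        subst ha1
        split_ifs at h4 ⊢ <;> omega
      · rw [Multiset.countP_cons, hC5, if_neg (by omega)]
/-- On a multiset of arcs all lying in `flowE B`, counting membership in a filter
of `flowE B` is the same as counting the filter predicate. -/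
lemma countP_filter_flowE {B : ℕ} (C : Multiset (ℕ × ℕ)) (q : ℕ × ℕ → Prop)
    [DecidablePred q] (hC : ∀ a ∈ C, a ∈ flowE B) :
    C.countP (· ∈ (flowE B).filter q) = C.countP q := by
  apply Multiset.countP_congr rfl
  intro a ha
  simp only [Finset.mem_filter, eq_iff_iff]
  exact ⟨fun h => h.2, fun h => ⟨hC a ha, h⟩⟩

lemma flow_decomp (B : ℕ) (hB : 0 < B) :
    ∀ (v : ℕ) (g : ℕ × ℕ → ℕ),
      (∀ a, g a ≠ 0 → a ∈ flowE B) →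
      (∑ a ∈ (flowE B).filter (fun a => a.1 = 0), g a = v) →
      (∑ a ∈ (flowE B).filter (fun a => a.2 = B), g a = v) →
      (∀ u, 0 < u → u < B →
        ∑ a ∈ (flowE B).filter (fun a => a.2 = u), g a
          = ∑ a ∈ (flowE B).filter (fun a => a.1 = u), g a) →
      ∃ W : Fin v → Multiset (ℕ × ℕ),
        (∀ k, ((W k).map (fun a => a.2 - a.1)).sum ≤ B) ∧
        (∀ k, ∀ a ∈ W k, a ∈ flowE B) ∧
        (∀ a, (∑ k, (W k).count a) = g a) := by
  intro v
  induction v with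
  | zero =>
    intro g hsup h0 hBv hcons
    have key : ∀ a, g a = 0 := by
      by_contra h
      push_neg at h
      obtain ⟨a1, ha1⟩ := h
      have hS : a1 ∈ (flowE B).filter (fun a => g a ≠ 0) :=
        Finset.mem_filter.2 ⟨hsup a1 ha1, ha1⟩
      set S := (flowE B).filter (fun a => g a ≠ 0) with hSdef
      have hne : (S.image Prod.fst).Nonempty := ⟨a1.1, Finset.mem_image_of_mem _ hS⟩
      obtain ⟨a0, ha0S, ha0⟩ := Finset.mem_image.1 ((S.image Prod.fst).min'_mem hne)
      obtain ⟨ha0E, ha0g⟩ := Finset.mem_filter.1 ha0S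
      obtain ⟨h1, h2⟩ := mem_flowE.1 ha0E
      by_cases h0' : a0.1 = 0
      · have hmem : a0 ∈ (flowE B).filter (fun a => a.1 = 0) :=
          Finset.mem_filter.2 ⟨ha0E, h0'⟩
        have := Finset.single_le_sum (f := g) (fun b _ => Nat.zero_le _) hmem
        omega
      · have hu1 : 0 < a0.1 := by omega
        have hu2 : a0.1 < B := by omega
        have hpos : 1 ≤ ∑ a ∈ (flowE B).filter (fun a => a.2 = a0.1), g a := by
          rw [hcons a0.1 hu1 hu2]
          have hmem : a0 ∈ (flowE B).filter (fun a => a.1 = a0.1) :=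
            Finset.mem_filter.2 ⟨ha0E, rfl⟩
          have := Finset.single_le_sum (f := g) (fun b _ => Nat.zero_le _) hmem
          omega
        obtain ⟨b, hbF, hbg⟩ : ∃ b ∈ (flowE B).filter (fun a => a.2 = a0.1), g b ≠ 0 := by
          apply Finset.exists_ne_zero_of_sum_ne_zero; omega
        obtain ⟨hbE, hb2⟩ := Finset.mem_filter.1 hbF
        have hbS : b ∈ S := Finset.mem_filter.2 ⟨hbE, hbg⟩
        have hmin := (S.image Prod.fst).min'_le b.1 (Finset.mem_image_of_mem _ hbS)
        have := (mem_flowE.1 hbE).1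
        omega
    exact ⟨fun k => k.elim0, fun k => k.elim0, fun k => k.elim0,
      fun a => by simp [key a]⟩
  | succ w ih =>
    intro g hsup h0 hBv hcons
    obtain ⟨C, hC1, hC2, hC3, hC4, hC5⟩ :=
      flow_walk B g hsup hcons B 0 (by omega) hB (by omega)
    set g' : ℕ × ℕ → ℕ := fun a => g a - C.count a with hg'
    have hg'le : ∀ a, g' a ≤ g a := fun a => Nat.sub_le _ _
    have hcount0 : ∀ a, a ∉ flowE B → C.count a = 0 := fun a ha =>
      Multiset.count_eq_zero_of_notMem (fun hmem => ha (hC2 a hmem).1)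
    have hsup' : ∀ a, g' a ≠ 0 → a ∈ flowE B := by
      intro a ha
      by_contra hnot
      have := hsup a
      have hz : g a = 0 := by by_contra h2; exact hnot (this h2)
      simp only [hg'] at ha
      omega
    -- generic: sum of g' over a filter
    have hsub : ∀ (q : ℕ × ℕ → Prop) (inst : DecidablePred q),
        ∑ a ∈ (flowE B).filter q, g' a
          = ∑ a ∈ (flowE B).filter q, g a - C.countP q := by
      intro q inst
      rw [show (∑ a ∈ (flowE B).filter q, g' a)
          = ∑ a ∈ (flowE B).filter q, (g a - C.count a) from rfl]
      rw [nat_sum_sub _ _ _ (fun a _ => hC1 a), fsum_count_eq,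
        countP_filter_flowE C q (fun a ha => (hC2 a ha).1)]
    have hcountle : ∀ (q : ℕ × ℕ → Prop) (inst : DecidablePred q),
        C.countP q ≤ ∑ a ∈ (flowE B).filter q, g a := by
      intro q inst
      rw [← countP_filter_flowE (B := B) C q (fun a ha => (hC2 a ha).1), ← fsum_count_eq]
      exact Finset.sum_le_sum (fun a _ => hC1 a)
    have hC20 : C.countP (fun a => a.2 = 0) = 0 := by
      apply Multiset.countP_eq_zero.2
      intro a ha
      have := (mem_flowE.1 (hC2 a ha).1).1
      omega
    have h0' : ∑ a ∈ (flowE B).filter (fun a => a.1 = 0), g' a = w := by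
      rw [hsub]
      have := hC4 0 hB
      rw [if_pos rfl] at this
      have hle := hcountle (fun a => a.1 = 0) inferInstance
      omega
    have hB' : ∑ a ∈ (flowE B).filter (fun a => a.2 = B), g' a = w := by
      rw [hsub]
      have hle := hcountle (fun a => a.2 = B) inferInstance
      omega
    have hcons' : ∀ u, 0 < u → u < B →
        ∑ a ∈ (flowE B).filter (fun a => a.2 = u), g' a
          = ∑ a ∈ (flowE B).filter (fun a => a.1 = u), g' a := by
      intro u hu1 hu2
      rw [hsub, hsub]
      have h4 := hC4 u hu2
      rw [if_neg (by omega)] at h4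
      have := hcons u hu1 hu2
      have l1 := hcountle (fun a => a.2 = u) inferInstance
      have l2 := hcountle (fun a => a.1 = u) inferInstance
      omega
    obtain ⟨W', hW1, hW2, hW3⟩ := ih g' hsup' h0' hB' hcons'
    refine ⟨Fin.cons C W', ?_, ?_, ?_⟩
    · intro k
      refine Fin.cases ?_ ?_ k
      · rw [Fin.cons_zero, hC3]; omega
      · intro k'; rw [Fin.cons_succ]; exact hW1 k'
    · intro k
      refine Fin.cases ?_ ?_ k
      · rw [Fin.cons_zero]; exact fun a ha => (hC2 a ha).1
      · intro k'; rw [Fin.cons_succ]; exact hW2 k'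
    · intro a
      rw [Fin.sum_univ_succ]
      simp only [Fin.cons_zero, Fin.cons_succ]
      rw [hW3 a]
      have := hC1 a
      simp only [hg']
      omega

/-- The finite set of "slot units": quadruples `(t, k, a, i)` where `t` is a structure
index with `t0 ≤ t`, `k < v t` indexes a path of structure `t`, `a` is an arc of that
path with length `c`, and `i` indexes one unit of flow on that arc. -/
def unitSet {δ : ℕ} (v : Fin δ → ℕ) (W' : Fin δ → ℕ → Multiset (ℕ × ℕ)) (c : ℕ)
    (t0 : Fin δ) : Finset (Fin δ × ℕ × (ℕ × ℕ) × ℕ) :=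
  (univ.filter (fun t => t0 ≤ t)).biUnion (fun t =>
    (range (v t)).biUnion (fun k =>
      ((W' t k).filter (fun a => a.2 - a.1 = c)).toFinset.biUnion (fun a =>
        (range ((W' t k).count a)).image (fun i => (t, k, a, i)))))

lemma mem_unitSet {δ : ℕ} {v : Fin δ → ℕ} {W' : Fin δ → ℕ → Multiset (ℕ × ℕ)} {c : ℕ}
    {t0 : Fin δ} {t : Fin δ} {k : ℕ} {a : ℕ × ℕ} {i : ℕ} :
    (t, k, a, i) ∈ unitSet v W' c t0 ↔
      t0 ≤ t ∧ k < v t ∧ a ∈ W' t k ∧ a.2 - a.1 = c ∧ i < (W' t k).count a := by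
  simp only [unitSet, Finset.mem_biUnion, Finset.mem_filter, Finset.mem_univ, true_and,
    Finset.mem_range, Multiset.mem_toFinset, Multiset.mem_filter, Finset.mem_image,
    Prod.mk.injEq]
  constructor
  · rintro ⟨t', ht', k', hk', a', ⟨ha'm, ha'c⟩, i', hi', rfl, rfl, rfl, rfl⟩
    exact ⟨ht', hk', ha'm, ha'c, hi'⟩
  · rintro ⟨h1, h2, h3, h4, h5⟩
    exact ⟨t, h1, k, h2, a, ⟨h3, h4⟩, i, h5, rfl, rfl, rfl, rfl⟩

lemma len_of_mem_unitSet {δ : ℕ} {v : Fin δ → ℕ} {W' : Fin δ → ℕ → Multiset (ℕ × ℕ)}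
    {c : ℕ} {t0 : Fin δ} {u : Fin δ × ℕ × (ℕ × ℕ) × ℕ} (h : u ∈ unitSet v W' c t0) :
    u.2.2.1.2 - u.2.2.1.1 = c := by
  obtain ⟨t, k, a, i⟩ := u
  exact (mem_unitSet.1 h).2.2.2.1

lemma card_unitSet {δ : ℕ} (v : Fin δ → ℕ) (W' : Fin δ → ℕ → Multiset (ℕ × ℕ)) (c : ℕ)
    (t0 : Fin δ) :
    (unitSet v W' c t0).card
      = ∑ t ∈ univ.filter (fun t => t0 ≤ t), ∑ k ∈ range (v t),
          ((W' t k).countP (fun a => a.2 - a.1 = c)) := by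
  rw [unitSet, Finset.card_biUnion]
  · refine Finset.sum_congr rfl fun t _ => ?_
    rw [Finset.card_biUnion]
    · refine Finset.sum_congr rfl fun k _ => ?_
      rw [Finset.card_biUnion]
      · rw [Multiset.countP_eq_card_filter]
        rw [show ((W' t k).filter (fun a => a.2 - a.1 = c)).card
            = ∑ a ∈ ((W' t k).filter (fun a => a.2 - a.1 = c)).toFinset,
                ((W' t k).filter (fun a => a.2 - a.1 = c)).count a from
          (Multiset.toFinset_sum_count_eq _).symm]
        refine Finset.sum_congr rfl fun a ha => ?_
        rw [Finset.card_image_of_injective _ (fun i j h => by simpa using h),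
          Finset.card_range]
        rw [Multiset.count_filter,
          if_pos (Multiset.mem_filter.1 (Multiset.mem_toFinset.1 ha)).2]
      · intro a ha b hb hab
        simp only [Finset.disjoint_left, Finset.mem_image, Finset.mem_range]
        rintro x ⟨i, hi, rfl⟩ ⟨j, hj, hx⟩
        simp only [Prod.mk.injEq, true_and] at hx
        exact hab hx.1.symm
    · intro k hk k' hk' hkk'
      simp only [Finset.disjoint_left, Finset.mem_biUnion, Finset.mem_image]
      rintro x ⟨a, ha, i, hi, rfl⟩ ⟨a', ha', j, hj, hx⟩
      simp only [Prod.mk.injEq, true_and] at hx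
      exact hkk' hx.1.symm
  · intro t ht t' ht' htt'
    simp only [Finset.disjoint_left, Finset.mem_biUnion, Finset.mem_image]
    rintro x ⟨k, hk, a, ha, i, hi, rfl⟩ ⟨k', hk', a', ha', j, hj, hx⟩
    simp only [Prod.mk.injEq] at hx
    exact htt' hx.1.symm

lemma fin_tail_telescope {δ : ℕ} (t0 : Fin δ) (Z : ℕ → ℤ) :
    ∑ t ∈ univ.filter (fun t : Fin δ => t0 ≤ t), (Z (t.val + 1) - Z t.val)
      = Z δ - Z t0.val := by
  have h1 : ∑ t ∈ univ.filter (fun t : Fin δ => t0 ≤ t), (Z (t.val + 1) - Z t.val)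
      = ∑ i ∈ Finset.Ico t0.val δ, (Z (i + 1) - Z i) := by
    rw [Finset.sum_filter]
    have h2 : ∀ t : Fin δ, (if t0 ≤ t then Z (t.val + 1) - Z t.val else 0)
        = (fun i => if t0.val ≤ i then Z (i + 1) - Z i else 0) t.val := by
      intro t
      simp only [Fin.le_def]
    rw [Finset.sum_congr rfl (fun t _ => h2 t),
      Fin.sum_univ_eq_sum_range (fun i => if t0.val ≤ i then Z (i + 1) - Z i else 0)]
    rw [← Finset.sum_filter]
    congr 1
    ext i
    simp only [Finset.mem_filter, Finset.mem_range, Finset.mem_Ico]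
    omega
  rw [h1, Finset.sum_Ico_eq_sub _ t0.2.le, Finset.sum_range_sub, Finset.sum_range_sub]
  ring

/-- The partition of a fintype into the (nonempty) fibers of a map `key`. -/
def fiberPartition {α κ : Type*} [Fintype α] [DecidableEq α] [DecidableEq κ]
    (key : α → κ) : Finpartition (univ : Finset α) where
  parts := (univ.image key).image (fun q => univ.filter (fun x => key x = q))
  supIndep := by
    rw [Finset.supIndep_iff_pairwiseDisjoint]
    intro X hX Y hY hXY
    simp only [Finset.coe_image, Set.mem_image, Finset.mem_coe, Finset.mem_image] at hX hY
    obtain ⟨q1, _, rfl⟩ := hX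
    obtain ⟨q2, _, rfl⟩ := hY
    simp only [Function.onFun, id_eq, Finset.disjoint_left]
    intro x hx1 hx2
    simp only [Finset.mem_filter] at hx1 hx2
    exact hXY (by rw [← hx1.2, ← hx2.2])
  sup_parts := by
    ext a
    simp only [Finset.mem_sup, Finset.mem_image, id_eq]
    constructor
    · rintro ⟨S, _, hS⟩; exact Finset.mem_univ a
    · intro _
      exact ⟨univ.filter (fun x => key x = key a),
        ⟨key a, ⟨a, Finset.mem_univ a, rfl⟩, rfl⟩,
        Finset.mem_filter.2 ⟨Finset.mem_univ a, rfl⟩⟩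
  bot_notMem := by
    rw [Finset.bot_eq_empty]
    intro h
    obtain ⟨q, hq, hfib⟩ := Finset.mem_image.1 h
    obtain ⟨a, _, rfl⟩ := Finset.mem_image.1 hq
    have ha : a ∈ univ.filter (fun x => key x = key a) :=
      Finset.mem_filter.2 ⟨Finset.mem_univ a, rfl⟩
    rw [show univ.filter (fun x => key x = key a) = ∅ from hfib] at ha
    exact absurd ha (Finset.notMem_empty a)

lemma sum_fiberPartition_parts {α κ M : Type*} [Fintype α] [DecidableEq α]
    [DecidableEq κ] [AddCommMonoid M] (key : α → κ) (F : Finset α → M) :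
    ∑ S ∈ (fiberPartition key).parts, F S
      = ∑ q ∈ univ.image key, F (univ.filter (fun x => key x = q)) := by
  rw [fiberPartition]
  rw [Finset.sum_image]
  intro q1 hq1 q2 hq2 heq
  obtain ⟨a, _, rfl⟩ := Finset.mem_image.1 hq1
  have ha : a ∈ univ.filter (fun x => key x = key a) :=
    Finset.mem_filter.2 ⟨Finset.mem_univ a, rfl⟩
  rw [show univ.filter (fun x => key x = key a) = univ.filter (fun x => key x = q2) from heq] at ha
  exact (Finset.mem_filter.1 ha).2

lemma mem_unitSet' {δ : ℕ} {v : Fin δ → ℕ} {W' : Fin δ → ℕ → Multiset (ℕ × ℕ)} {c : ℕ}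
    {t0 : Fin δ} {u : Fin δ × ℕ × (ℕ × ℕ) × ℕ} :
    u ∈ unitSet v W' c t0 ↔
      t0 ≤ u.1 ∧ u.2.1 < v u.1 ∧ u.2.2.1 ∈ W' u.1 u.2.1 ∧ u.2.2.1.2 - u.2.2.1.1 = c
        ∧ u.2.2.2 < (W' u.1 u.2.1).count u.2.2.1 := by
  obtain ⟨t, k, a, i⟩ := u
  exact mem_unitSet

/-- For every feasible solution `(f, y, v, z)` of (FLOW), there exists a
capacity-feasible schedule of the instance whose makespan is at most the objective
value `∑ t, P t * v t`.  Schedules are `Finpartition`s of the job set; the makespan is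
`∑ S ∈ Q.parts, S.sup p`; `P : Fin δ → ℕ` enumerates, strictly increasingly, exactly
the distinct values among the processing times `p j`. -/
theorem flow_to_schedule (n B : ℕ) (hn : 1 ≤ n) (hB : 1 ≤ B)
    (s p : Fin n → ℕ) (hs : ∀ j, 1 ≤ s j ∧ s j ≤ B) (hp : ∀ j, 1 ≤ p j)
    (δ : ℕ) (P : Fin δ → ℕ) (hPmono : StrictMono P)
    (hPmem : ∀ t, ∃ j, p j = P t) (hPall : ∀ j, ∃ t, p j = P t)
    (f y : ℕ × ℕ → Fin δ → ℕ) (v : Fin δ → ℕ) (z : ℕ → ℕ → ℕ)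
    (hfeas : FlowFeasible n B s p δ P f y v z) :
    ∃ Q : Finpartition (univ : Finset (Fin n)),
      (∀ S ∈ Q.parts, ∑ j ∈ S, s j ≤ B) ∧
      ∑ S ∈ Q.parts, S.sup p ≤ ∑ t, P t * v t := by
  classical
  obtain ⟨hf0, hy0, hz0, hzd, hout0, hinB, hconsv, hbal⟩ := hfeas
  choose τ hτ using hPall
  have hAJE : flowAJ n B s ⊆ flowE B := by
    intro a ha
    simp only [flowAJ, Finset.mem_filter, Finset.mem_product, Finset.mem_range] at ha
    exact mem_flowE.2 ⟨ha.2.1, by omega⟩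
  have hALE : flowAL B ⊆ flowE B := by
    intro a ha
    simp only [flowAL, Finset.mem_filter, Finset.mem_product, Finset.mem_range] at ha
    exact mem_flowE.2 ⟨by omega, by omega⟩
  set g : Fin δ → ℕ × ℕ → ℕ := fun t a => f a t + y a t with hgdef
  have hgsup : ∀ t a, g t a ≠ 0 → a ∈ flowE B := by
    intro t a h
    by_cases hAJ : a ∈ flowAJ n B s
    · exact hAJE hAJ
    by_cases hAL : a ∈ flowAL B
    · exact hALE hAL
    · exfalso
      have h1 := hf0 a t hAJ
      have h2 := hy0 a t hAL
      simp only [hgdef] at h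
      omega
  have hconvf : ∀ (t : Fin δ) (q : ℕ × ℕ → Prop) (inst : DecidablePred q),
      ∑ a ∈ (flowE B).filter q, f a t = ∑ a ∈ (flowAJ n B s).filter q, f a t := by
    intro t q inst
    refine (Finset.sum_subset (Finset.filter_subset_filter q hAJE) ?_).symm
    intro a ha hna
    refine hf0 a t fun hmem => hna ?_
    exact Finset.mem_filter.2 ⟨hmem, (Finset.mem_filter.1 ha).2⟩
  have hconvy : ∀ (t : Fin δ) (q : ℕ × ℕ → Prop) (inst : DecidablePred q),
      ∑ a ∈ (flowE B).filter q, y a t = ∑ a ∈ (flowAL B).filter q, y a t := by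
    intro t q inst
    refine (Finset.sum_subset (Finset.filter_subset_filter q hALE) ?_).symm
    intro a ha hna
    refine hy0 a t fun hmem => hna ?_
    exact Finset.mem_filter.2 ⟨hmem, (Finset.mem_filter.1 ha).2⟩
  have hconv : ∀ (t : Fin δ) (q : ℕ × ℕ → Prop) (inst : DecidablePred q),
      ∑ a ∈ (flowE B).filter q, g t a
        = (∑ a ∈ (flowAJ n B s).filter q, f a t) + ∑ a ∈ (flowAL B).filter q, y a t := by
    intro t q inst
    rw [← hconvf t q inst, ← hconvy t q inst, ← Finset.sum_add_distrib]
  have hdec : ∀ t : Fin δ, ∃ W : Fin (v t) → Multiset (ℕ × ℕ),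
      (∀ k, ((W k).map (fun a => a.2 - a.1)).sum ≤ B) ∧
      (∀ k, ∀ a ∈ W k, a ∈ flowE B) ∧
      (∀ a, (∑ k, (W k).count a) = g t a) := by
    intro t
    refine flow_decomp B hB (v t) (g t) (hgsup t) ?_ ?_ ?_
    · rw [hconv t _ inferInstance]; exact hout0 t
    · rw [hconv t _ inferInstance]; exact hinB t
    · intro u h1 h2
      rw [hconv t _ inferInstance, hconv t _ inferInstance]
      exact hconsv t u h1 h2
  choose W hW1 hW2 hW3 using hdec
  set W' : Fin δ → ℕ → Multiset (ℕ × ℕ) :=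
    fun t k => if h : k < v t then W t ⟨k, h⟩ else 0 with hW'def
  have hW'eq : ∀ (t : Fin δ) (k : Fin (v t)), W' t k.val = W t k := by
    intro t k
    simp only [hW'def, dif_pos k.2, Fin.eta]
  have hW'sum : ∀ t a, ∑ k ∈ range (v t), (W' t k).count a = g t a := by
    intro t a
    rw [← hW3 t a, ← Fin.sum_univ_eq_sum_range (fun k => (W' t k).count a) (v t)]
    exact Finset.sum_congr rfl fun k _ => by rw [hW'eq]
  have hW'len : ∀ t k, ((W' t k).map (fun a => a.2 - a.1)).sum ≤ B := by
    intro t k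
    by_cases h : k < v t
    · rw [show W' t k = W t ⟨k, h⟩ from by simp only [hW'def, dif_pos h]]
      exact hW1 t ⟨k, h⟩
    · rw [show W' t k = 0 from by simp only [hW'def, dif_neg h]]
      simp
  have hW'E : ∀ t k a, a ∈ W' t k → a ∈ flowE B := by
    intro t k a ha
    by_cases h : k < v t
    · rw [show W' t k = W t ⟨k, h⟩ from by simp only [hW'def, dif_pos h]] at ha
      exact hW2 t ⟨k, h⟩ a ha
    · rw [show W' t k = 0 from by simp only [hW'def, dif_neg h]] at ha
      simp at ha
  -- the key counting inequality
  have hkey : ∀ (c : ℕ), 1 ≤ c → c ≤ B → ∀ t0 : Fin δ,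
      (univ.filter (fun j => s j = c ∧ t0 ≤ τ j)).card ≤ (unitSet v W' c t0).card := by
    intro c hc1 hc2 t0
    have hjobs : (univ.filter (fun j => s j = c ∧ t0 ≤ τ j)).card
        = ∑ t ∈ univ.filter (fun t : Fin δ => t0 ≤ t),
            (univ.filter (fun j => s j = c ∧ p j = P t)).card := by
      rw [Finset.card_eq_sum_card_fiberwise
        (f := τ) (t := univ.filter (fun t : Fin δ => t0 ≤ t))
        (fun j hj => Finset.mem_filter.2 ⟨Finset.mem_univ _, (Finset.mem_filter.1 hj).2.2⟩)]
      refine Finset.sum_congr rfl fun t ht => ?_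
      congr 1
      ext j
      simp only [Finset.filter_filter, Finset.mem_filter, Finset.mem_univ, true_and]
      constructor
      · rintro ⟨⟨h1, h2⟩, rfl⟩
        exact ⟨h1, hτ j⟩
      · rintro ⟨h1, h2⟩
        have ht' : τ j = t := hPmono.injective (by rw [← hτ j, h2])
        exact ⟨⟨h1, ht' ▸ (Finset.mem_filter.1 ht).2⟩, ht'⟩
    have hslot : ∀ t : Fin δ,
        (∑ a ∈ (flowAJ n B s).filter (fun a => a.2 - a.1 = c), f a t)
          ≤ ∑ k ∈ range (v t), (W' t k).countP (fun a => a.2 - a.1 = c) := by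
      intro t
      have e1 : ∑ k ∈ range (v t), (W' t k).countP (fun a => a.2 - a.1 = c)
          = ∑ a ∈ (flowE B).filter (fun a => a.2 - a.1 = c), g t a := by
        have e2 : ∀ k ∈ range (v t), (W' t k).countP (fun a => a.2 - a.1 = c)
            = ∑ a ∈ (flowE B).filter (fun a => a.2 - a.1 = c), (W' t k).count a := by
          intro k _
          rw [fsum_count_eq, countP_filter_flowE _ _ (fun a ha => hW'E t k a ha)]
        rw [Finset.sum_congr rfl e2, Finset.sum_comm]
        exact Finset.sum_congr rfl fun a _ => hW'sum t a
      rw [e1, ← hconvf t _ inferInstance]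
      refine Finset.sum_le_sum fun a _ => ?_
      simp only [hgdef]
      omega
    rw [hjobs, card_unitSet]
    have htel : (∑ t ∈ univ.filter (fun t : Fin δ => t0 ≤ t),
          ((univ.filter (fun j => s j = c ∧ p j = P t)).card : ℤ))
        ≤ ∑ t ∈ univ.filter (fun t : Fin δ => t0 ≤ t),
            ((∑ a ∈ (flowAJ n B s).filter (fun a => a.2 - a.1 = c), f a t : ℕ) : ℤ) := by
      have heq : ∀ t ∈ univ.filter (fun t : Fin δ => t0 ≤ t),
          ((univ.filter (fun j => s j = c ∧ p j = P t)).card : ℤ)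
            - ((∑ a ∈ (flowAJ n B s).filter (fun a => a.2 - a.1 = c), f a t : ℕ) : ℤ)
            = (z c (t.val + 1) : ℤ) - (z c t.val : ℤ) := by
        intro t _
        have := hbal t c hc1 hc2
        push_cast at this ⊢
        convert this using 2
      have hsum : ∑ t ∈ univ.filter (fun t : Fin δ => t0 ≤ t),
          (((univ.filter (fun j => s j = c ∧ p j = P t)).card : ℤ)
            - ((∑ a ∈ (flowAJ n B s).filter (fun a => a.2 - a.1 = c), f a t : ℕ) : ℤ))
          = (z c δ : ℤ) - (z c t0.val : ℤ) := by
        rw [Finset.sum_congr rfl heq]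
        exact fin_tail_telescope t0 (fun i => (z c i : ℤ))
      rw [Finset.sum_sub_distrib] at hsum
      rw [hzd c] at hsum
      have : (0 : ℤ) ≤ z c t0.val := Int.ofNat_nonneg _
      omega
    have htel' : (∑ t ∈ univ.filter (fun t : Fin δ => t0 ≤ t),
          (univ.filter (fun j => s j = c ∧ p j = P t)).card)
        ≤ ∑ t ∈ univ.filter (fun t : Fin δ => t0 ≤ t),
            ∑ a ∈ (flowAJ n B s).filter (fun a => a.2 - a.1 = c), f a t := by
      exact_mod_cast htel
    exact le_trans htel' (Finset.sum_le_sum fun t _ => hslot t)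
  -- Hall's condition and the assignment of jobs to units
  set r : Fin n → Finset (Fin δ × ℕ × (ℕ × ℕ) × ℕ) :=
    fun j => unitSet v W' (s j) (τ j) with hrdef
  have hall : ∀ S : Finset (Fin n), S.card ≤ (S.biUnion r).card := by
    intro S
    rcases S.eq_empty_or_nonempty with rfl | hSne
    · simp
    obtain ⟨jstar, hjstar⟩ := hSne
    set t0f : ℕ → Fin δ := fun c =>
      if h : (S.filter (fun j => s j = c)).Nonempty
      then (((S.filter (fun j => s j = c)).image τ).min' (h.image τ)) else τ jstar
      with ht0f
    have hattain : ∀ c ∈ S.image s, ∃ j1 ∈ S, s j1 = c ∧ τ j1 = t0f c := by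
      intro c hc
      obtain ⟨j0, hj0S, hj0⟩ := Finset.mem_image.1 hc
      have hne : (S.filter (fun j => s j = c)).Nonempty :=
        ⟨j0, Finset.mem_filter.2 ⟨hj0S, hj0⟩⟩
      simp only [ht0f]
      rw [dif_pos hne]
      obtain ⟨j1, hj1, hj1eq⟩ :=
        Finset.mem_image.1 (((S.filter (fun j => s j = c)).image τ).min'_mem (hne.image τ))
      obtain ⟨hj1S, hj1c⟩ := Finset.mem_filter.1 hj1
      exact ⟨j1, hj1S, hj1c, hj1eq⟩
    have hle : ∀ c ∈ S.image s, ∀ j ∈ S, s j = c → t0f c ≤ τ j := by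
      intro c hc j hjS hjc
      obtain ⟨j0, hj0S, hj0⟩ := Finset.mem_image.1 hc
      have hne : (S.filter (fun j => s j = c)).Nonempty :=
        ⟨j0, Finset.mem_filter.2 ⟨hj0S, hj0⟩⟩
      simp only [ht0f]
      rw [dif_pos hne]
      exact Finset.min'_le _ _ (Finset.mem_image_of_mem τ (Finset.mem_filter.2 ⟨hjS, hjc⟩))
    have hcard : S.card = ∑ c ∈ S.image s, (S.filter (fun j => s j = c)).card :=
      Finset.card_eq_sum_card_fiberwise (fun j hj => Finset.mem_image_of_mem s hj)
    have hstep : ∀ c ∈ S.image s,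
        (S.filter (fun j => s j = c)).card ≤ (unitSet v W' c (t0f c)).card := by
      intro c hc
      obtain ⟨j0, hj0S, hj0⟩ := Finset.mem_image.1 hc
      refine le_trans (Finset.card_le_card ?_) (hkey c (hj0 ▸ (hs j0).1) (hj0 ▸ (hs j0).2) (t0f c))
      intro j hj
      obtain ⟨hjS, hjc⟩ := Finset.mem_filter.1 hj
      exact Finset.mem_filter.2 ⟨Finset.mem_univ _, hjc, hle c hc j hjS hjc⟩
    have hdisj : ∀ c1 ∈ S.image s, ∀ c2 ∈ S.image s, c1 ≠ c2 →
        Disjoint (unitSet v W' c1 (t0f c1)) (unitSet v W' c2 (t0f c2)) := by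
      intro c1 _ c2 _ hne12
      rw [Finset.disjoint_left]
      intro u hu1 hu2
      exact hne12 ((len_of_mem_unitSet hu1).symm.trans (len_of_mem_unitSet hu2))
    have hsub : (S.image s).biUnion (fun c => unitSet v W' c (t0f c)) ⊆ S.biUnion r := by
      intro u hu
      obtain ⟨c, hc, hcu⟩ := Finset.mem_biUnion.1 hu
      obtain ⟨j1, hj1S, hj1c, hj1t⟩ := hattain c hc
      refine Finset.mem_biUnion.2 ⟨j1, hj1S, ?_⟩
      rw [hrdef]
      dsimp only
      rw [hj1c, hj1t]
      exact hcu
    calc S.card = ∑ c ∈ S.image s, (S.filter (fun j => s j = c)).card := hcard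
      _ ≤ ∑ c ∈ S.image s, (unitSet v W' c (t0f c)).card :=
          Finset.sum_le_sum hstep
      _ = ((S.image s).biUnion (fun c => unitSet v W' c (t0f c))).card :=
          (Finset.card_biUnion hdisj).symm
      _ ≤ (S.biUnion r).card := Finset.card_le_card hsub
  obtain ⟨A, hAinj, hAmem⟩ := (Finset.all_card_le_biUnion_card_iff_exists_injective r).1 hall
  have hA : ∀ j, τ j ≤ (A j).1 ∧ (A j).2.1 < v (A j).1 ∧ (A j).2.2.1 ∈ W' (A j).1 (A j).2.1
      ∧ (A j).2.2.1.2 - (A j).2.2.1.1 = s j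
      ∧ (A j).2.2.2 < (W' (A j).1 (A j).2.1).count (A j).2.2.1 := by
    intro j
    have := hAmem j
    rw [hrdef] at this
    exact mem_unitSet'.1 this
  set key : Fin n → Fin δ × ℕ := fun j => ((A j).1, (A j).2.1) with hkeydef
  refine ⟨fiberPartition key, ?_, ?_⟩
  · -- capacity of each part
    intro S hS
    rw [fiberPartition] at hS
    simp only [Finset.mem_image] at hS
    obtain ⟨q, hq, rfl⟩ := hS
    set t : Fin δ := q.1
    set k : ℕ := q.2
    set φ : Fin n → (ℕ × ℕ) × ℕ := fun j => (A j).2.2 with hφdef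
    have hφinj : ∀ j1 ∈ univ.filter (fun x => key x = q),
        ∀ j2 ∈ univ.filter (fun x => key x = q), φ j1 = φ j2 → j1 = j2 := by
      intro j1 hj1 j2 hj2 heq
      have h1 : key j1 = key j2 := by
        rw [(Finset.mem_filter.1 hj1).2, (Finset.mem_filter.1 hj2).2]
      simp only [hkeydef, Prod.mk.injEq] at h1
      simp only [hφdef] at heq
      apply hAinj
      exact Prod.ext h1.1 (Prod.ext h1.2 heq)
    set T : Finset ((ℕ × ℕ) × ℕ) := (W' t k).toFinset.biUnion
      (fun a => (range ((W' t k).count a)).image (fun i => (a, i))) with hTdef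
    have hsub : (univ.filter (fun x => key x = q)).image φ ⊆ T := by
      intro u hu
      obtain ⟨j, hj, rfl⟩ := Finset.mem_image.1 hu
      have hkj : key j = q := (Finset.mem_filter.1 hj).2
      have hA5 := hA j
      have ht : (A j).1 = t := congrArg Prod.fst hkj
      have hk : (A j).2.1 = k := congrArg Prod.snd hkj
      rw [hTdef]
      refine Finset.mem_biUnion.2 ⟨(A j).2.2.1, ?_, ?_⟩
      · rw [Multiset.mem_toFinset, ← ht, ← hk]
        exact hA5.2.2.1
      · refine Finset.mem_image.2 ⟨(A j).2.2.2, ?_, rfl⟩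
        rw [Finset.mem_range, ← ht, ← hk]
        exact hA5.2.2.2.2
    have hsj : ∀ j ∈ univ.filter (fun x => key x = q), s j = (φ j).1.2 - (φ j).1.1 :=
      fun j _ => ((hA j).2.2.2.1).symm
    calc ∑ j ∈ univ.filter (fun x => key x = q), s j
        = ∑ j ∈ univ.filter (fun x => key x = q), ((φ j).1.2 - (φ j).1.1) :=
          Finset.sum_congr rfl hsj
      _ = ∑ u ∈ (univ.filter (fun x => key x = q)).image φ, (u.1.2 - u.1.1) :=
          (Finset.sum_image (f := fun u : (ℕ × ℕ) × ℕ => u.1.2 - u.1.1)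
            (fun j1 h1 j2 h2 heq => hφinj j1 h1 j2 h2 heq)).symm
      _ ≤ ∑ u ∈ T, (u.1.2 - u.1.1) :=
          Finset.sum_le_sum_of_subset hsub
      _ = ∑ a ∈ (W' t k).toFinset, (W' t k).count a * (a.2 - a.1) := by
          rw [hTdef, Finset.sum_biUnion]
          · refine Finset.sum_congr rfl fun a _ => ?_
            rw [Finset.sum_image (fun i1 _ i2 _ h => by simpa using h)]
            simp [Finset.sum_const, Finset.card_range, mul_comm]
          · intro a1 h1 a2 h2 hne
            simp only [Function.onFun]
            rw [Finset.disjoint_left]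
            rintro x hx1 hx2
            obtain ⟨i1, _, rfl⟩ := Finset.mem_image.1 hx1
            obtain ⟨i2, _, hx⟩ := Finset.mem_image.1 hx2
            simp only [Prod.mk.injEq] at hx
            exact hne (hx.1.symm ▸ rfl)
      _ = ((W' t k).map (fun a => a.2 - a.1)).sum :=
          fsum_count_mul _ _ _ (fun a ha => Multiset.mem_toFinset.2 ha)
      _ ≤ B := hW'len t k
  · -- makespan bound
    rw [sum_fiberPartition_parts]
    have hstep1 : ∀ q ∈ univ.image key,
        (univ.filter (fun x => key x = q)).sup p ≤ P q.1 := by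
      intro q hq
      refine Finset.sup_le fun j hj => ?_
      have hkj : key j = q := (Finset.mem_filter.1 hj).2
      have h1 : τ j ≤ (A j).1 := (hA j).1
      have ht : (A j).1 = q.1 := congrArg Prod.fst hkj
      rw [hτ j]
      exact hPmono.monotone (ht ▸ h1)
    refine le_trans (Finset.sum_le_sum hstep1) ?_
    have hsubkey : univ.image key ⊆
        (univ : Finset (Fin δ)).biUnion (fun t => (range (v t)).image (fun k => (t, k))) := by
      intro q hq
      obtain ⟨j, _, rfl⟩ := Finset.mem_image.1 hq
      refine Finset.mem_biUnion.2 ⟨(A j).1, Finset.mem_univ _, ?_⟩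
      exact Finset.mem_image.2 ⟨(A j).2.1, Finset.mem_range.2 (hA j).2.1, rfl⟩
    refine le_trans (Finset.sum_le_sum_of_subset hsubkey) ?_
    rw [Finset.sum_biUnion]
    · refine le_of_eq (Finset.sum_congr rfl fun t _ => ?_)
      rw [Finset.sum_image (fun i1 _ i2 _ h => by simpa using h)]
      simp [Finset.sum_const, Finset.card_range, mul_comm]
    · intro t1 _ t2 _ hne
      simp only [Function.onFun]
      rw [Finset.disjoint_left]
      rintro x hx1 hx2
      obtain ⟨i1, _, rfl⟩ := Finset.mem_image.1 hx1
      obtain ⟨i2, _, hx⟩ := Finset.mem_image.1 hx2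
      simp only [Prod.mk.injEq] at hx
      exact hne (hx.1.symm ▸ rfl)
end

section
/- Let B ≥ 1 be an integer and let f : {0,…,B} × {0,…,B} → ℕ satisfy f(i,j) = 0 whenever i ≥ j, together with flow conservation at every interior node: for every u with 0 < u < B, Σ_{i<u} f(i,u) = Σ_{j>u} f(u,j). Then for every pair (i,j) with 1 ≤ i < j ≤ B and f(i,j) > 0, there exist m ≥ 1 and nodes 0 = u_0 < u_1 < … < u_m = i with f(u_r, u_{r+1}) > 0 for every 0 ≤ r < m; i.e., the tail of every positively-flowed arc is reachable from node 0 along positively-flowed arcs. -/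
open Finset

/-- Correctness of Rule 1 of the paper: let `f` be a nonnegative integer flow on the
nodes `{0,…,B}` with `f i j = 0` whenever `i ≥ j`, satisfying flow conservation at every
interior node `0 < u < B`.  Then for every arc `(i,j)` with `1 ≤ i < j ≤ B` carrying
positive flow, there exist `m ≥ 1` and nodes `0 = u 0 < u 1 < … < u m = i` with
`f (u r) (u (r+1)) > 0` for every `r < m`; i.e. the tail of every positively-flowed arc
is reachable from node `0` along positively-flowed arcs. -/
theorem positively_flowed_arcs_reachable (B : ℕ) (hB : 1 ≤ B)
    (f : Fin (B + 1) → Fin (B + 1) → ℕ)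
    (hzero : ∀ i j : Fin (B + 1), j ≤ i → f i j = 0)
    (hcons : ∀ u : Fin (B + 1), 0 < u.val → u.val < B →
      ∑ i, f i u = ∑ j, f u j) :
    ∀ i j : Fin (B + 1), 1 ≤ i.val → i < j → 0 < f i j →
      ∃ (m : ℕ) (u : ℕ → Fin (B + 1)), 1 ≤ m ∧ u 0 = 0 ∧ u m = i ∧
        ∀ r < m, u r < u (r + 1) ∧ 0 < f (u r) (u (r + 1)) := by
  suffices h : ∀ n : ℕ, ∀ i : Fin (B + 1), i.val ≤ n → 1 ≤ i.val → i.val < B →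
      (∃ j, 0 < f i j) →
      ∃ (m : ℕ) (u : ℕ → Fin (B + 1)), 1 ≤ m ∧ u 0 = 0 ∧ u m = i ∧
        ∀ r < m, u r < u (r + 1) ∧ 0 < f (u r) (u (r + 1)) by
    intro i j h1 hij hpos
    have hiB : i.val < B := lt_of_lt_of_le hij (Nat.lt_succ_iff.mp j.isLt)
    exact h i.val i le_rfl h1 hiB ⟨j, hpos⟩
  intro n
  induction n with
  | zero => intro i hle h1 _ _; omega
  | succ n ih =>
    intro i hle h1 hiB ⟨j, hpos⟩
    -- inflow at i is positive
    have hout : 0 < ∑ j, f i j :=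
      lt_of_lt_of_le hpos (Finset.single_le_sum (fun _ _ => Nat.zero_le _) (mem_univ j))
    have hin : 0 < ∑ k, f k i := by rw [hcons i h1 hiB]; exact hout
    obtain ⟨k, -, hk⟩ := Finset.exists_ne_zero_of_sum_ne_zero hin.ne'
    have hk : 0 < f k i := Nat.pos_of_ne_zero hk
    have hki : k < i := by
      by_contra hc
      exact hk.ne' (hzero k i (le_of_not_gt hc))
    by_cases hk0 : k.val = 0
    · have hk0' : k = 0 := Fin.ext hk0
      refine ⟨1, fun r => if r = 0 then 0 else i, le_rfl, by simp, by simp, ?_⟩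
      intro r hr
      interval_cases r
      simp only [if_pos rfl, if_neg one_ne_zero]
      exact ⟨by rwa [hk0'] at hki, by rwa [hk0'] at hk⟩
    · have hkn : k.val ≤ n := by omega
      obtain ⟨m, u, hm, hu0, hum, hstep⟩ :=
        ih k hkn (by omega) (by omega) ⟨i, hk⟩
      refine ⟨m + 1, fun r => if r ≤ m then u r else i, le_add_self, ?_, ?_, ?_⟩
      · simp [Nat.zero_le, hu0]
      · simp
      · intro r hr
        rcases Nat.lt_or_ge r m with hrm | hrm
        · simpa [Nat.le_of_lt hrm, Nat.succ_le_of_lt hrm] using hstep r hrm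
        · have : r = m := by omega
          subst this
          simp [hum, hki, hk]
end
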